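/- arXiv:2006.12491 — 5 statements merged into one kernel-verified Lean document; each statement's English description precedes it below -/
import Mathlib

section
/- Let B be an n×n real constant row-sum matrix (n ≥ 2) with Be = λe. Then every complex eigenvalue μ of B with μ ≠ λ lies in the Gershgorin region of the second type of B^T. -/
open Matrix
open scoped ENNReal

/-- Non-increasing (descending) sort of a list of reals. -/
noncomputable def sortDesc (l : List ℝ) : List ℝ := (l.insertionSort (· ≤ ·)).reverse

/-- Given the descending rearrangement `l` of `n` numbers, the sum of the largest
(about) half minus the sum of the smallest (about) half, skipping the middle
element when `n` is odd. -/
noncomputable def halfSumDiff (n : ℕ) (l : List ℝ) : ℝ :=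
  if n % 2 = 1 then (l.take ((n - 1) / 2)).sum - (l.drop ((n + 1) / 2)).sum
  else (l.take (n / 2)).sum - (l.drop (n / 2)).sum

/-- Radius of the `i`-th Gershgorin disc of the second type of `M`, computed from
the `i`-th row of `M` with the diagonal entry replaced by `0`. -/
noncomputable def secondTypeRadius {n : ℕ} (M : Matrix (Fin n) (Fin n) ℝ) (i : Fin n) : ℝ :=
  halfSumDiff n (sortDesc (List.ofFn fun j : Fin n => if j = i then 0 else M i j))

/-- The `i`-th Gershgorin disc of the second type of `M`. -/
noncomputable def secondTypeDisc {n : ℕ} (M : Matrix (Fin n) (Fin n) ℝ) (i : Fin n) : Set ℂ :=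
  Metric.closedBall ((M i i : ℝ) : ℂ) (secondTypeRadius M i)

/-- The Gershgorin region of the second type of `M`. -/
noncomputable def secondTypeRegion {n : ℕ} (M : Matrix (Fin n) (Fin n) ℝ) : Set ℂ :=
  ⋃ i : Fin n, secondTypeDisc M i

/-- `μ` is a (complex) eigenvalue of the real matrix `A`, i.e. a complex root of
its characteristic polynomial. -/
def IsEigenvalueC {n : ℕ} (A : Matrix (Fin n) (Fin n) ℝ) (μ : ℂ) : Prop :=
  ((A.map ((↑) : ℝ → ℂ)).charpoly).IsRoot μ

/-- The `k`-th largest element (1-indexed) among the `n - 1` off-diagonal entries of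
column `j` of `B`. -/
noncomputable def kthLargestOffDiag {n : ℕ} (B : Matrix (Fin n) (Fin n) ℝ) (j : Fin n)
    (k : ℕ) : ℝ :=
  (sortDesc (((List.ofFn fun i : Fin n => B i j).eraseIdx j.val))).getD (k - 1) 0

/-- The ℓ_p norm of a vector in ℝ^n. -/
noncomputable def lpNorm {n : ℕ} (p : ℝ≥0∞) (x : Fin n → ℝ) : ℝ :=
  @norm (PiLp p fun _ : Fin n => ℝ) _ ((WithLp.equiv p (∀ _ : Fin n, ℝ)).symm x)

/-- The seminorm-like quantity `τ_p(B)`: the supremum of `‖Bᵀ x‖_p` over all real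
vectors `x` with `xᵀ e = 0` and `‖x‖_p = 1`. -/
noncomputable def tau {n : ℕ} (p : ℝ≥0∞) (B : Matrix (Fin n) (Fin n) ℝ) : ℝ :=
  sSup { t : ℝ | ∃ x : Fin n → ℝ, (∑ i, x i) = 0 ∧ lpNorm p x = 1 ∧ t = lpNorm p (Bᵀ *ᵥ x) }

/-- The Ostrowski–Brauer set `Γ(M)` of a real square matrix `M`. -/
noncomputable def brauerSet {n : ℕ} (M : Matrix (Fin n) (Fin n) ℝ) : Set ℂ :=
  ⋃ (i : Fin n) (j : Fin n) (_ : i < j),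
    { y : ℂ | ‖y - (M i i : ℝ)‖ * ‖y - (M j j : ℝ)‖ ≤
        (∑ k ∈ Finset.univ.filter fun k => k ≠ i, |M i k|) *
        (∑ k ∈ Finset.univ.filter fun k => k ≠ j, |M j k|) }

/-- `cs_j(A)` from Definition 2.3: sorted column sums difference. -/
noncomputable def csCol {n : ℕ} (A : Matrix (Fin n) (Fin n) ℝ) (j : Fin n) : ℝ :=
  halfSumDiff n (sortDesc (List.ofFn fun i : Fin n => A i j))

section Aux

lemma sortDesc_sorted (l : List ℝ) : (sortDesc l).Pairwise (· ≥ ·) := by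
  have h := List.pairwise_insertionSort (· ≤ ·) l
  exact List.pairwise_reverse.mpr h

lemma sortDesc_perm (l : List ℝ) : (sortDesc l).Perm l :=
  (List.reverse_perm _).trans (List.perm_insertionSort _ _)

lemma sum_map_abs_sub_of_forall_le (c : ℝ) (l : List ℝ) (h : ∀ x ∈ l, c ≤ x) :
    (l.map (fun x => |x - c|)).sum = l.sum - l.length * c := by
  induction l with
  | nil => simp
  | cons a t ih =>
    simp only [List.map_cons, List.sum_cons, List.length_cons]
    rw [ih (fun x hx => h x (List.mem_cons_of_mem a hx)),
        abs_of_nonneg (sub_nonneg.mpr (h a (List.mem_cons_self)))]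
    push_cast
    ring

lemma sum_map_abs_sub_of_forall_ge (c : ℝ) (l : List ℝ) (h : ∀ x ∈ l, x ≤ c) :
    (l.map (fun x => |x - c|)).sum = l.length * c - l.sum := by
  induction l with
  | nil => simp
  | cons a t ih =>
    simp only [List.map_cons, List.sum_cons, List.length_cons]
    rw [ih (fun x hx => h x (List.mem_cons_of_mem a hx)),
        abs_of_nonpos (sub_nonpos.mpr (h a (List.mem_cons_self)))]
    push_cast
    ring

lemma sum_abs_sub_median (n : ℕ) (hn : 1 ≤ n) (l : List ℝ) (hl : l.Pairwise (· ≥ ·))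
    (hlen : l.length = n) :
    (l.map (fun x => |x - l.getD ((n - 1) / 2) 0|)).sum = halfSumDiff n l := by
  set m := (n - 1) / 2 with hm
  have hml : m < l.length := by omega
  set c := l.getD m 0 with hc
  have hcg : c = l[m] := List.getD_eq_getElem l 0 hml
  have hdropc : l.drop m = c :: l.drop (m + 1) := by
    rw [hcg]; exact List.drop_eq_getElem_cons hml
  have hpair : ∀ x ∈ l.take m, ∀ y ∈ l.drop m, y ≤ x := by
    have h2 := hl
    rw [← List.take_append_drop m l] at h2
    exact fun x hx y hy => (List.pairwise_append.mp h2).2.2 x hx y hy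
  have htake : ∀ x ∈ l.take m, c ≤ x := fun x hx =>
    hpair x hx c (by rw [hdropc]; exact List.mem_cons_self)
  have hdrop : ∀ y ∈ l.drop m, y ≤ c := by
    have hsd : (l.drop m).Pairwise (· ≥ ·) := hl.sublist (List.drop_sublist m l)
    intro y hy
    rw [hdropc] at hy hsd
    rcases List.mem_cons.mp hy with rfl | hy'
    · exact le_refl _
    · exact (List.pairwise_cons.mp hsd).1 y hy'
  have hsplit : (l.map (fun x => |x - c|)).sum =
      ((l.take m).sum - m * c) + ((n - m : ℕ) * c - (l.drop m).sum) := by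
    conv_lhs => rw [← List.take_append_drop m l]
    rw [List.map_append, List.sum_append,
        sum_map_abs_sub_of_forall_le c _ htake, sum_map_abs_sub_of_forall_ge c _ hdrop,
        List.length_take, List.length_drop, hlen, Nat.min_eq_left (by omega)]
  have hdsum : (l.drop m).sum = c + (l.drop (m + 1)).sum := by rw [hdropc, List.sum_cons]
  have htsum : (l.take (m + 1)).sum = (l.take m).sum + c := by
    rw [List.sum_take_succ l m hml, hcg]
  have hnm : ((n - m : ℕ) : ℝ) = (n : ℝ) - m := by
    have : m ≤ n := by omega
    push_cast [this]; ring
  unfold halfSumDiff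
  by_cases hpar : n % 2 = 1
  · rw [if_pos hpar]
    have h1 : (n - 1) / 2 = m := hm.symm
    have h2 : (n + 1) / 2 = m + 1 := by omega
    have h3 : n = 2 * m + 1 := by omega
    rw [h1, h2, hsplit, hdsum, hnm]
    have : (n : ℝ) = 2 * m + 1 := by exact_mod_cast congrArg (Nat.cast : ℕ → ℝ) h3
    rw [this]; ring
  · rw [if_neg hpar]
    have h3 : n = 2 * m + 2 := by omega
    have h2 : n / 2 = m + 1 := by omega
    rw [h2, hsplit, hdsum, htsum, hnm]
    have : (n : ℝ) = 2 * m + 2 := by exact_mod_cast congrArg (Nat.cast : ℕ → ℝ) h3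
    rw [this]; ring

end Aux

/-- Theorem 2: every eigenvalue of a real constant row-sum matrix `B`
other than the row sum `λ` lies in the Gershgorin region of the second type of `Bᵀ`. -/


theorem stmt1 {n : ℕ} (hn : 2 ≤ n) (B : Matrix (Fin n) (Fin n) ℝ)
    (lam : ℝ) (hB : B *ᵥ (1 : Fin n → ℝ) = lam • (1 : Fin n → ℝ))
    (mu : ℂ) (hmu : IsEigenvalueC B mu) (hne : mu ≠ (lam : ℂ)) :
    mu ∈ secondTypeRegion Bᵀ := by
  -- Step 1: obtain an eigenvector of `Bᵀ` (over ℂ) for `mu`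
  have hdet : (mu • (1 : Matrix (Fin n) (Fin n) ℂ) - B.map ((↑) : ℝ → ℂ)).det = 0 := by
    have h : Polynomial.eval mu ((B.map ((↑) : ℝ → ℂ)).charpoly) = 0 := hmu
    rw [Matrix.charpoly, ← Polynomial.coe_evalRingHom, RingHom.map_det] at h
    convert h using 2
    ext i j
    by_cases hij : i = j
    · subst hij
      simp [Matrix.charmatrix_apply_eq, Matrix.one_apply, Matrix.smul_apply, Matrix.sub_apply]
    · simp [Matrix.charmatrix_apply_ne _ _ _ hij, Matrix.one_apply, hij, Matrix.smul_apply,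
        Matrix.sub_apply]
  have hdetT : (mu • (1 : Matrix (Fin n) (Fin n) ℂ) - Bᵀ.map ((↑) : ℝ → ℂ)).det = 0 := by
    rw [← Matrix.det_transpose]
    have h : (mu • (1 : Matrix (Fin n) (Fin n) ℂ) - Bᵀ.map ((↑) : ℝ → ℂ))ᵀ
        = mu • (1 : Matrix (Fin n) (Fin n) ℂ) - B.map ((↑) : ℝ → ℂ) := by
      rw [Matrix.transpose_sub, Matrix.transpose_smul, Matrix.transpose_one,
        Matrix.transpose_map, Matrix.transpose_transpose]
    rw [h]; exact hdet
  obtain ⟨v, hv0, hv⟩ := Matrix.exists_mulVec_eq_zero_iff.mpr hdetT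
  rw [Matrix.sub_mulVec, sub_eq_zero, Matrix.smul_mulVec, Matrix.one_mulVec] at hv
  replace hv : (Bᵀ.map ((↑) : ℝ → ℂ)) *ᵥ v = mu • v := hv.symm
  -- Step 2: componentwise eigen-equation and row sums
  have heig : ∀ k, ∑ j, (B j k : ℂ) * v j = mu * v k := by
    intro k
    have h := congrFun hv k
    simpa [Matrix.mulVec, dotProduct, Matrix.map_apply, Matrix.transpose_apply,
      Pi.smul_apply, smul_eq_mul] using h
  have hrow : ∀ j, ∑ k, B j k = lam := by
    intro j
    have h := congrFun hB j
    simpa [Matrix.mulVec, dotProduct, Pi.one_apply, Pi.smul_apply, smul_eq_mul] using h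
  -- Step 3: the eigenvector sums to zero
  have hsum : ∑ j, v j = 0 := by
    have h1 : mu * (∑ j, v j) = (lam : ℂ) * (∑ j, v j) := by
      calc mu * ∑ j, v j = ∑ k, mu * v k := by rw [Finset.mul_sum]
        _ = ∑ k, ∑ j, (B j k : ℂ) * v j := by simp_rw [heig]
        _ = ∑ j, ∑ k, (B j k : ℂ) * v j := Finset.sum_comm
        _ = ∑ j, (∑ k, (B j k : ℂ)) * v j := by simp_rw [Finset.sum_mul]
        _ = ∑ j, (lam : ℂ) * v j := by
            refine Finset.sum_congr rfl fun j _ => ?_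
            congr 1
            rw [← Complex.ofReal_sum, hrow j]
        _ = (lam : ℂ) * ∑ j, v j := (Finset.mul_sum _ _ _).symm
    have h2 : (mu - (lam : ℂ)) * (∑ j, v j) = 0 := by rw [sub_mul, h1, sub_self]
    rcases mul_eq_zero.mp h2 with h | h
    · exact absurd (sub_eq_zero.mp h) hne
    · exact h
  -- Step 4: pick the index of maximal modulus
  obtain ⟨i, -, hi⟩ := Finset.exists_max_image Finset.univ (fun k => ‖v k‖)
    (by have : Nonempty (Fin n) := ⟨⟨0, by omega⟩⟩; exact Finset.univ_nonempty)
  have hvi : 0 < ‖v i‖ := by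
    obtain ⟨k, hk⟩ := Function.ne_iff.mp hv0
    calc (0 : ℝ) < ‖v k‖ := by simpa using hk
      _ ≤ ‖v i‖ := hi k (Finset.mem_univ k)
  -- Step 5: the shifted Gershgorin estimate, valid for every shift `c`
  have key : ∀ c : ℝ, ‖mu - (B i i : ℝ)‖ ≤
      (∑ j ∈ Finset.univ.erase i, |B j i - c|) + |c| := by
    intro c
    have e1 : ∑ j ∈ Finset.univ.erase i, (B j i : ℂ) * v j
        = mu * v i - (B i i : ℂ) * v i := by
      have h := Finset.sum_erase_add Finset.univ (fun j => (B j i : ℂ) * v j) (Finset.mem_univ i)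
      rw [heig i] at h
      linear_combination h
    have e2 : ∑ j ∈ Finset.univ.erase i, v j = -v i := by
      have h := Finset.sum_erase_add Finset.univ v (Finset.mem_univ i)
      rw [hsum] at h
      linear_combination h
    have hC1 : (mu - (B i i : ℝ) + (c : ℂ)) * v i
        = ∑ j ∈ Finset.univ.erase i, ((B j i : ℂ) - (c : ℂ)) * v j := by
      have h : ∑ j ∈ Finset.univ.erase i, ((B j i : ℂ) - (c : ℂ)) * v j
          = (∑ j ∈ Finset.univ.erase i, (B j i : ℂ) * v j)
            - (c : ℂ) * ∑ j ∈ Finset.univ.erase i, v j := by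
        rw [Finset.mul_sum, ← Finset.sum_sub_distrib]
        refine Finset.sum_congr rfl fun j _ => by ring
      rw [h, e1, e2]; ring
    have hC2 : ‖mu - (B i i : ℝ) + (c : ℂ)‖ * ‖v i‖
        ≤ (∑ j ∈ Finset.univ.erase i, |B j i - c|) * ‖v i‖ := by
      rw [← norm_mul, hC1]
      calc ‖∑ j ∈ Finset.univ.erase i, ((B j i : ℂ) - (c : ℂ)) * v j‖
          ≤ ∑ j ∈ Finset.univ.erase i, ‖((B j i : ℂ) - (c : ℂ)) * v j‖ :=
            norm_sum_le _ _
        _ ≤ ∑ j ∈ Finset.univ.erase i, |B j i - c| * ‖v i‖ := by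
            refine Finset.sum_le_sum fun j _ => ?_
            rw [norm_mul]
            have h : ‖(B j i : ℂ) - (c : ℂ)‖ = |B j i - c| := by
              rw [← Complex.ofReal_sub, Complex.norm_real, Real.norm_eq_abs]
            rw [h]
            exact mul_le_mul_of_nonneg_left (hi j (Finset.mem_univ j)) (abs_nonneg _)
        _ = (∑ j ∈ Finset.univ.erase i, |B j i - c|) * ‖v i‖ :=
            (Finset.sum_mul _ _ _).symm
    have hC3 : ‖mu - (B i i : ℝ) + (c : ℂ)‖
        ≤ ∑ j ∈ Finset.univ.erase i, |B j i - c| := le_of_mul_le_mul_right hC2 hvi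
    calc ‖mu - (B i i : ℝ)‖
        = ‖(mu - (B i i : ℝ) + (c : ℂ)) + (-(c : ℂ))‖ := by ring_nf
      _ ≤ ‖mu - (B i i : ℝ) + (c : ℂ)‖ + ‖-(c : ℂ)‖ :=
          norm_add_le _ _
      _ ≤ (∑ j ∈ Finset.univ.erase i, |B j i - c|) + |c| := by
          rw [norm_neg, Complex.norm_real, Real.norm_eq_abs]
          exact add_le_add_left hC3 _
  -- Step 6: choose the median shift and compare with the second-type radius
  set f : Fin n → ℝ := fun j => if j = i then 0 else B j i with hf
  set l : List ℝ := sortDesc (List.ofFn f) with hl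
  have hllen : l.length = n := by
    rw [hl, (sortDesc_perm _).length_eq, List.length_ofFn]
  set c : ℝ := l.getD ((n - 1) / 2) 0 with hcdef
  have hmed : (l.map (fun x => |x - c|)).sum = halfSumDiff n l :=
    sum_abs_sub_median n (by omega) l (sortDesc_sorted _) hllen
  have hsum_eq : (l.map (fun x => |x - c|)).sum = ∑ j, |f j - c| := by
    rw [hl, ((sortDesc_perm _).map _).sum_eq, List.map_ofFn, List.sum_ofFn]
    rfl
  have hradius : secondTypeRadius Bᵀ i = halfSumDiff n l := by
    rw [hl, hf]
    simp only [secondTypeRadius, Matrix.transpose_apply]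
  have hfin : ∑ j, |f j - c| = (∑ j ∈ Finset.univ.erase i, |B j i - c|) + |c| := by
    rw [← Finset.sum_erase_add _ _ (Finset.mem_univ i)]
    congr 1
    · refine Finset.sum_congr rfl fun j hj => ?_
      rw [hf]
      simp only [if_neg (Finset.ne_of_mem_erase hj)]
    · rw [hf]
      simp
  -- Conclusion
  refine Set.mem_iUnion.mpr ⟨i, ?_⟩
  rw [secondTypeDisc, Metric.mem_closedBall]
  have hcenter : ((Bᵀ i i : ℝ) : ℂ) = ((B i i : ℝ) : ℂ) := rfl
  calc dist mu ((Bᵀ i i : ℝ) : ℂ) = ‖mu - (B i i : ℝ)‖ := by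
        rw [hcenter, Complex.dist_eq]
    _ ≤ (∑ j ∈ Finset.univ.erase i, |B j i - c|) + |c| := key c
    _ = ∑ j, |f j - c| := hfin.symm
    _ = halfSumDiff n l := by rw [← hsum_eq, hmed]
    _ = secondTypeRadius Bᵀ i := hradius.symm
end

section
/- Let n be an even integer and let B = [b_{ij}] be an n×n real constant row-sum matrix with constant row-sum λ₁ (Be = λ₁e). For each j, let β_j be the (n/2)-th largest element among the n−1 off-diagonal entries b_{1j}, …, b_{j−1,j}, b_{j+1,j}, …, b_{nj} of column j, and let F be the matrix whose j-th column is L_j − β_j e, where L_j is the j-th column of B. Then the Gershgorin region of the second type of F^T is a subset of the Gershgorin region of the second type of B^T, and every complex eigenvalue of B different from λ₁ lies in the Gershgorin region of the second type of F^T. -/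
open Matrix
open scoped ENNReal

open Matrix
namespace Stmt4Aux

lemma sortDesc_perm (l : List ℝ) : (sortDesc l).Perm l :=
  (List.reverse_perm _).trans (List.perm_insertionSort _ l)

lemma sortDesc_length (l : List ℝ) : (sortDesc l).length = l.length :=
  (sortDesc_perm l).length_eq

lemma sortDesc_sorted (l : List ℝ) : (sortDesc l).Pairwise (· ≥ ·) := by
  have h := List.pairwise_insertionSort (· ≤ ·) l
  unfold sortDesc
  rw [List.pairwise_reverse]
  exact h

lemma take_le (t : ℝ) (s : List ℝ) (m : ℕ) (hs : s.Pairwise (· ≥ ·))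
    (h : m ≤ s.countP (fun x => decide (t ≤ x))) : ∀ x ∈ s.take m, t ≤ x := by
  induction s generalizing m with
  | nil => simp
  | cons a s ih =>
    cases m with
    | zero => simp
    | succ m =>
      have hta : t ≤ a := by
        by_contra hlt
        push_neg at hlt
        have hz : (a :: s).countP (fun x => decide (t ≤ x)) = 0 := by
          rw [List.countP_eq_zero]
          intro b hb
          rcases List.mem_cons.mp hb with rfl | hb
          · simpa using not_le.mpr hlt
          · have : b ≤ a := List.rel_of_pairwise_cons hs hb
            simpa using not_le.mpr (lt_of_le_of_lt this hlt)
        omega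
      intro x hx
      rw [List.take_succ_cons] at hx
      rcases List.mem_cons.mp hx with rfl | hx
      · exact hta
      · have hle : (a :: s).countP (fun x => decide (t ≤ x)) ≤
            s.countP (fun x => decide (t ≤ x)) + 1 := by
          rw [List.countP_cons]; split <;> omega
        exact ih m hs.of_cons (by omega) x hx

lemma drop_le (t : ℝ) (s : List ℝ) (m : ℕ) (hs : s.Pairwise (· ≥ ·))
    (h : s.length ≤ s.countP (fun x => decide (x ≤ t)) + m) : ∀ x ∈ s.drop m, x ≤ t := by
  induction s generalizing m with
  | nil => simp
  | cons a s ih =>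
    cases m with
    | zero =>
      have hcle := List.countP_le_length (p := fun x => decide (x ≤ t)) (l := a :: s)
      have : (a :: s).countP (fun x => decide (x ≤ t)) = (a :: s).length := by omega
      have hall := List.countP_eq_length.mp this
      intro x hx
      simpa using hall x (by simpa using hx)
    | succ m =>
      intro x hx
      rw [List.drop_succ_cons] at hx
      by_cases hat : a ≤ t
      · have : x ≤ a := List.rel_of_pairwise_cons hs (List.mem_of_mem_drop hx)
        exact this.trans hat
      · refine ih m hs.of_cons ?_ x hx
        have : (a :: s).countP (fun x => decide (x ≤ t)) = s.countP (fun x => decide (x ≤ t)) := by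
          rw [List.countP_cons]
          simp [hat]
        simp only [List.length_cons] at h
        omega

lemma sum_map_sub_const (l : List ℝ) (t : ℝ) :
    (l.map (fun x => x - t)).sum = l.sum - l.length * t := by
  induction l with
  | nil => simp
  | cons a l ih => simp [ih]; ring

lemma sum_map_const_sub (l : List ℝ) (t : ℝ) :
    (l.map (fun x => t - x)).sum = l.length * t - l.sum := by
  induction l with
  | nil => simp
  | cons a l ih => simp [ih]; ring

lemma halfSumDiff_le_sum_abs {n : ℕ} (hn : n % 2 = 0) (l : List ℝ) (hl : l.length = n)
    (t : ℝ) : halfSumDiff n l ≤ (l.map fun x => |x - t|).sum := by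
  have h2 : n / 2 ≤ n := Nat.div_le_self n 2
  have hlt : (l.take (n / 2)).length = n / 2 := by
    rw [List.length_take]; omega
  have hld : (l.drop (n / 2)).length = n / 2 := by
    rw [List.length_drop]; omega
  have hmap : (l.map fun x => |x - t|).sum
      = ((l.take (n / 2)).map fun x => |x - t|).sum + ((l.drop (n / 2)).map fun x => |x - t|).sum := by
    conv_lhs => rw [← List.take_append_drop (n / 2) l]
    rw [List.map_append, List.sum_append]
  have h1 : ((l.take (n / 2)).map fun x => x - t).sum ≤ ((l.take (n / 2)).map fun x => |x - t|).sum :=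
    List.sum_le_sum (fun x _ => le_abs_self _)
  have hdrop : ((l.drop (n / 2)).map fun x => t - x).sum ≤ ((l.drop (n / 2)).map fun x => |x - t|).sum :=
    List.sum_le_sum (fun x _ => by rw [abs_sub_comm]; exact le_abs_self _)
  rw [sum_map_sub_const] at h1
  rw [sum_map_const_sub] at hdrop
  rw [hlt] at h1
  rw [hld] at hdrop
  unfold halfSumDiff
  rw [if_neg (by omega)]
  rw [hmap]
  linarith

lemma sum_abs_le_halfSumDiff {n : ℕ} (hn : n % 2 = 0) (l : List ℝ) (hl : l.length = n)
    (t : ℝ) (h1 : n / 2 ≤ l.countP (fun x => decide (t ≤ x)))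
    (h2 : n / 2 ≤ l.countP (fun x => decide (x ≤ t))) :
    (l.map fun x => |x - t|).sum ≤ halfSumDiff n (sortDesc l) := by
  set s := sortDesc l with hs
  have hperm : s.Perm l := sortDesc_perm l
  have hlen : s.length = n := by rw [sortDesc_length, hl]
  have hsort : s.Pairwise (· ≥ ·) := sortDesc_sorted l
  have hc1 : n / 2 ≤ s.countP (fun x => decide (t ≤ x)) := by
    rw [hperm.countP_eq]; exact h1
  have hc2 : n / 2 ≤ s.countP (fun x => decide (x ≤ t)) := by
    rw [hperm.countP_eq]; exact h2
  have htake : ∀ x ∈ s.take (n / 2), t ≤ x := take_le t s (n / 2) hsort hc1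
  have hdrop : ∀ x ∈ s.drop (n / 2), x ≤ t := drop_le t s (n / 2) hsort (by omega)
  have hmapeq : (l.map fun x => |x - t|).sum = (s.map fun x => |x - t|).sum :=
    ((hperm.map _).sum_eq).symm
  have h2' : n / 2 ≤ n := Nat.div_le_self n 2
  have hlt : (s.take (n / 2)).length = n / 2 := by rw [List.length_take]; omega
  have hld : (s.drop (n / 2)).length = n / 2 := by rw [List.length_drop]; omega
  have hsplit : (s.map fun x => |x - t|).sum
      = ((s.take (n / 2)).map fun x => |x - t|).sum + ((s.drop (n / 2)).map fun x => |x - t|).sum := by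
    conv_lhs => rw [← List.take_append_drop (n / 2) s]
    rw [List.map_append, List.sum_append]
  have e1 : ((s.take (n / 2)).map fun x => |x - t|).sum = ((s.take (n / 2)).map fun x => x - t).sum := by
    apply congrArg
    apply List.map_congr_left
    intro x hx
    exact abs_of_nonneg (sub_nonneg.mpr (htake x hx))
  have e2 : ((s.drop (n / 2)).map fun x => |x - t|).sum = ((s.drop (n / 2)).map fun x => t - x).sum := by
    apply congrArg
    apply List.map_congr_left
    intro x hx
    rw [abs_sub_comm]
    exact abs_of_nonneg (sub_nonneg.mpr (hdrop x hx))
  rw [hmapeq, hsplit, e1, e2, sum_map_sub_const, sum_map_const_sub, hlt, hld]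
  unfold halfSumDiff
  rw [if_neg (by omega)]
  linarith


lemma perm_cons_eraseIdx {α : Type*} (l : List α) (k : ℕ) (h : k < l.length) :
    l.Perm (l[k] :: l.eraseIdx k) := by
  rw [List.eraseIdx_eq_take_drop_succ]
  conv_lhs => rw [← List.take_append_drop k l, List.drop_eq_getElem_cons h]
  exact List.perm_middle

lemma exists_eigvec {n : ℕ} (A : Matrix (Fin n) (Fin n) ℂ) (mu : ℂ)
    (h : A.charpoly.IsRoot mu) : ∃ v : Fin n → ℂ, v ≠ 0 ∧ Aᵀ *ᵥ v = mu • v := by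
  have hdet : (Matrix.scalar (Fin n) mu - A).det = 0 := by
    have := h
    rw [Polynomial.IsRoot, Matrix.charpoly, eval_det, Matrix.matPolyEquiv_charmatrix] at this
    simpa using this
  have hdetT : (Matrix.scalar (Fin n) mu - Aᵀ).det = 0 := by
    rw [← Matrix.det_transpose] at hdet
    rw [← hdet]
    congr 1
    rw [Matrix.transpose_sub]
    congr 1
    simp [Matrix.scalar_apply, Matrix.diagonal_transpose]
  obtain ⟨v, hv0, hv⟩ := Matrix.exists_mulVec_eq_zero_iff.mpr hdetT
  refine ⟨v, hv0, ?_⟩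
  rw [Matrix.sub_mulVec] at hv
  have : (Matrix.scalar (Fin n) mu) *ᵥ v = mu • v := by
    simp [Matrix.scalar_apply, Matrix.smul_mulVec]
  rw [this] at hv
  have := sub_eq_zero.mp hv
  exact this.symm ▸ rfl

section ColumnFacts

variable {n : ℕ} (B : Matrix (Fin n) (Fin n) ℝ) (i : Fin n)

/-- Off-diagonal entries of column `i` of `B`. -/
noncomputable def Ecol : List ℝ := (List.ofFn fun r : Fin n => B r i).eraseIdx i.val

lemma Ecol_length : (Ecol B i).length = n - 1 := by
  unfold Ecol
  rw [List.length_eraseIdx]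
  simp [i.isLt]

lemma beta_eq : kthLargestOffDiag B i (n / 2) = (sortDesc (Ecol B i)).getD (n / 2 - 1) 0 := rfl

lemma beta_counts (hn : n % 2 = 0) (hn0 : 0 < n) :
    n / 2 ≤ (Ecol B i).countP (fun x => decide (kthLargestOffDiag B i (n / 2) ≤ x)) ∧
    n / 2 ≤ (Ecol B i).countP (fun x => decide (x ≤ kthLargestOffDiag B i (n / 2))) := by
  set β := kthLargestOffDiag B i (n / 2) with hβdef
  set sE := sortDesc (Ecol B i) with hsE
  have hn2 : 2 ≤ n := by omega
  have hlen : sE.length = n - 1 := by rw [hsE, sortDesc_length, Ecol_length]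
  have hidx : n / 2 - 1 < sE.length := by rw [hlen]; omega
  have hβ : β = sE[n / 2 - 1] := by
    rw [hβdef, beta_eq, ← hsE]
    exact List.getD_eq_getElem sE 0 hidx
  have hsort : sE.Pairwise (· ≥ ·) := sortDesc_sorted _
  have hperm : sE.Perm (Ecol B i) := sortDesc_perm _
  have hpair := List.pairwise_iff_getElem.mp hsort
  constructor
  · rw [← hperm.countP_eq]
    have htake : ∀ x ∈ sE.take (n / 2), β ≤ x := by
      intro x hx
      obtain ⟨k, hk, hkx⟩ := List.mem_iff_getElem.mp hx
      have hklt : k < n / 2 := by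
        rw [List.length_take] at hk; omega
      rw [List.getElem_take] at hkx
      rw [← hkx, hβ]
      rcases Nat.lt_or_ge k (n / 2 - 1) with hlt | hge
      · exact hpair k (n / 2 - 1) (by omega) hidx hlt
      · have hk' : k = n / 2 - 1 := by omega
        subst hk'
        exact le_rfl
    have hlt2 : (sE.take (n / 2)).length = n / 2 := by
      rw [List.length_take]; omega
    calc n / 2 = (sE.take (n / 2)).countP (fun x => decide (β ≤ x)) := by
          rw [List.countP_eq_length.mpr (fun a ha => decide_eq_true (htake a ha)), hlt2]
      _ ≤ sE.countP (fun x => decide (β ≤ x)) :=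
          (List.take_sublist _ _).countP_le
  · rw [← hperm.countP_eq]
    have hdrop : ∀ x ∈ sE.drop (n / 2 - 1), x ≤ β := by
      intro x hx
      obtain ⟨k, hk, hkx⟩ := List.mem_iff_getElem.mp hx
      rw [List.getElem_drop] at hkx
      rw [← hkx, hβ]
      rcases Nat.eq_zero_or_pos k with rfl | hpos
      · simp
      · exact hpair (n / 2 - 1) (n / 2 - 1 + k) hidx (by
          rw [List.length_drop] at hk; omega) (by omega)
    have hld : (sE.drop (n / 2 - 1)).length = n / 2 := by
      rw [List.length_drop]; omega
    calc n / 2 = (sE.drop (n / 2 - 1)).countP (fun x => decide (x ≤ β)) := by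
          rw [List.countP_eq_length.mpr (fun a ha => decide_eq_true (hdrop a ha)), hld]
      _ ≤ sE.countP (fun x => decide (x ≤ β)) :=
          (List.drop_sublist _ _).countP_le

lemma Lb_eraseIdx :
    (List.ofFn fun j : Fin n => if j = i then (0:ℝ) else B j i).eraseIdx i.val = Ecol B i := by
  unfold Ecol
  apply List.ext_getElem
  · rw [List.length_eraseIdx, List.length_eraseIdx]; simp
  · intro k h1 h2
    rw [List.getElem_eraseIdx, List.getElem_eraseIdx]
    rw [List.length_eraseIdx] at h1
    simp only [List.length_ofFn, i.isLt, if_true] at h1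
    split
    · rename_i hki
      rw [List.getElem_ofFn, List.getElem_ofFn]
      rw [if_neg]
      refine Fin.ne_of_val_ne ?_
      show k ≠ i.val
      omega
    · rename_i hki
      rw [List.getElem_ofFn, List.getElem_ofFn]
      rw [if_neg]
      refine Fin.ne_of_val_ne ?_
      show k + 1 ≠ i.val
      omega

lemma map_eraseIdx' (g : ℝ → ℝ) : ∀ (l : List ℝ) (k : ℕ),
    (l.map g).eraseIdx k = (l.eraseIdx k).map g
  | [], _ => by simp
  | a :: l, 0 => by simp
  | a :: l, k + 1 => by simp [map_eraseIdx' g l k]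

lemma Lf_eraseIdx (β : ℝ) :
    (List.ofFn fun j : Fin n => if j = i then (0:ℝ) else B j i - β).eraseIdx i.val
      = (Ecol B i).map (fun x => x - β) := by
  unfold Ecol
  rw [← map_eraseIdx']
  apply List.ext_getElem
  · rw [List.length_eraseIdx, List.length_eraseIdx, List.length_map]; simp
  · intro k h1 h2
    rw [List.getElem_eraseIdx, List.getElem_eraseIdx]
    rw [List.length_eraseIdx] at h1
    simp only [List.length_ofFn, i.isLt, if_true] at h1
    split
    · rename_i hki
      rw [List.getElem_ofFn, List.getElem_map, List.getElem_ofFn, if_neg]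
      refine Fin.ne_of_val_ne ?_
      show k ≠ i.val
      omega
    · rename_i hki
      rw [List.getElem_ofFn, List.getElem_map, List.getElem_ofFn, if_neg]
      refine Fin.ne_of_val_ne ?_
      show k + 1 ≠ i.val
      omega

end ColumnFacts

lemma radius_facts {n : ℕ} (hn : n % 2 = 0) (B : Matrix (Fin n) (Fin n) ℝ) (i : Fin n) :
    halfSumDiff n (sortDesc (List.ofFn fun j : Fin n =>
        if j = i then 0 else B j i - kthLargestOffDiag B i (n / 2)))
      = (∑ j : Fin n, |if j = i then (0:ℝ) else B j i - kthLargestOffDiag B i (n / 2)|) ∧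
    (∑ j : Fin n, |if j = i then (0:ℝ) else B j i - kthLargestOffDiag B i (n / 2)|)
        + |kthLargestOffDiag B i (n / 2)| ≤ secondTypeRadius Bᵀ i := by
  have hn0 : 0 < n := i.pos
  set β := kthLargestOffDiag B i (n / 2) with hβ
  set Lb : List ℝ := List.ofFn fun j : Fin n => if j = i then (0:ℝ) else B j i with hLb
  set Lf : List ℝ := List.ofFn fun j : Fin n => if j = i then (0:ℝ) else B j i - β with hLf
  have hLbl : Lb.length = n := by rw [hLb, List.length_ofFn]
  have hLfl : Lf.length = n := by rw [hLf, List.length_ofFn]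
  have hiLb : i.val < Lb.length := by rw [hLbl]; exact i.isLt
  have hiLf : i.val < Lf.length := by rw [hLfl]; exact i.isLt
  have hLb0 : Lb[i.val] = 0 := by
    show (List.ofFn fun j : Fin n => if j = i then (0:ℝ) else B j i)[i.val]'(by simp) = 0
    rw [List.getElem_ofFn, if_pos (Fin.ext rfl)]
  have hLf0 : Lf[i.val] = 0 := by
    show (List.ofFn fun j : Fin n => if j = i then (0:ℝ) else B j i - β)[i.val]'(by simp) = 0
    rw [List.getElem_ofFn, if_pos (Fin.ext rfl)]
  have hpermb : Lb.Perm ((0:ℝ) :: Ecol B i) := by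
    have h1 := perm_cons_eraseIdx Lb i.val hiLb
    have h2 : Lb.eraseIdx i.val = Ecol B i := Lb_eraseIdx B i
    rw [hLb0, h2] at h1
    exact h1
  have hpermf : Lf.Perm ((0:ℝ) :: (Ecol B i).map (fun x => x - β)) := by
    have h1 := perm_cons_eraseIdx Lf i.val hiLf
    have h2 : Lf.eraseIdx i.val = (Ecol B i).map (fun x => x - β) := Lf_eraseIdx B i β
    rw [hLf0, h2] at h1
    exact h1
  obtain ⟨hc1, hc2⟩ := beta_counts B i hn hn0
  rw [← hβ] at hc1 hc2
  have countLb1 : n / 2 ≤ Lb.countP (fun x => decide (β ≤ x)) := by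
    rw [hpermb.countP_eq, List.countP_cons]
    split <;> omega
  have countLb2 : n / 2 ≤ Lb.countP (fun x => decide (x ≤ β)) := by
    rw [hpermb.countP_eq, List.countP_cons]
    split <;> omega
  have hcomp1 : ((fun x => decide ((0:ℝ) ≤ x)) ∘ (fun x => x - β)) = fun x => decide (β ≤ x) := by
    funext x
    rw [Function.comp_apply, decide_eq_decide]
    exact sub_nonneg
  have hcomp2 : ((fun x => decide (x ≤ (0:ℝ))) ∘ (fun x => x - β)) = fun x => decide (x ≤ β) := by
    funext x
    rw [Function.comp_apply, decide_eq_decide]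
    exact sub_nonpos
  have countLf1 : n / 2 ≤ Lf.countP (fun x => decide ((0:ℝ) ≤ x)) := by
    rw [hpermf.countP_eq, List.countP_cons, List.countP_map, hcomp1]
    split <;> omega
  have countLf2 : n / 2 ≤ Lf.countP (fun x => decide (x ≤ (0:ℝ))) := by
    rw [hpermf.countP_eq, List.countP_cons, List.countP_map, hcomp2]
    split <;> omega
  have hsumLf : (Lf.map fun x => |x - 0|).sum
      = ∑ j : Fin n, |if j = i then (0:ℝ) else B j i - β| := by
    rw [hLf, List.map_ofFn, List.sum_ofFn]
    refine Finset.sum_congr rfl fun j _ => ?_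
    rw [Function.comp_apply, sub_zero]
  have hsumLb : (Lb.map fun x => |x - β|).sum
      = (∑ j : Fin n, |if j = i then (0:ℝ) else B j i - β|) + |β| := by
    rw [hLb, List.map_ofFn, List.sum_ofFn]
    have hpt : ∀ j : Fin n, ((fun x => |x - β|) ∘ fun j : Fin n => if j = i then (0:ℝ) else B j i) j
        = |if j = i then (0:ℝ) else B j i - β| + (if j = i then |β| else 0) := by
      intro j
      rw [Function.comp_apply]
      by_cases hj : j = i
      · simp [hj]
      · simp [hj]
    rw [Finset.sum_congr rfl fun j _ => hpt j, Finset.sum_add_distrib]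
    congr 1
    rw [Finset.sum_ite_eq' Finset.univ i fun _ => |β|]
    simp
  constructor
  · apply le_antisymm
    · calc halfSumDiff n (sortDesc Lf) ≤ ((sortDesc Lf).map fun x => |x - 0|).sum :=
            halfSumDiff_le_sum_abs hn (sortDesc Lf) (by rw [sortDesc_length, hLfl]) 0
        _ = (Lf.map fun x => |x - 0|).sum := ((sortDesc_perm Lf).map _).sum_eq
        _ = _ := hsumLf
    · rw [← hsumLf]
      exact sum_abs_le_halfSumDiff hn Lf hLfl 0 countLf1 countLf2
  · have hr : secondTypeRadius Bᵀ i = halfSumDiff n (sortDesc Lb) := by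
      unfold secondTypeRadius
      rw [hLb]
      congr 2
    rw [hr, ← hsumLb]
    exact sum_abs_le_halfSumDiff hn Lb hLbl β countLb1 countLb2

end Stmt4Aux


/-- Theorem 4: for `n` even and `B` constant row-sum with row sum `λ₁`,
with `F` obtained by subtracting from each column `j` of `B` the `(n/2)`-th largest
off-diagonal entry of that column, the Gershgorin region of the second type of `Fᵀ`
is contained in that of `Bᵀ` and contains every eigenvalue of `B` other than `λ₁`. -/
theorem stmt4 {n : ℕ} (hn : Even n) (B : Matrix (Fin n) (Fin n) ℝ)
    (lam1 : ℝ) (hB : B *ᵥ (1 : Fin n → ℝ) = lam1 • (1 : Fin n → ℝ))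
    (F : Matrix (Fin n) (Fin n) ℝ)
    (hF : ∀ i j, F i j = B i j - kthLargestOffDiag B j (n / 2)) :
    secondTypeRegion Fᵀ ⊆ secondTypeRegion Bᵀ ∧
      ∀ mu : ℂ, IsEigenvalueC B mu → mu ≠ (lam1 : ℂ) → mu ∈ secondTypeRegion Fᵀ :=  by
  have hn2 : n % 2 = 0 := Nat.even_iff.mp hn
  constructor
  · -- Part 1 : region inclusion
    intro z hz
    rw [secondTypeRegion, Set.mem_iUnion] at hz ⊢
    obtain ⟨i, hzi⟩ := hz
    refine ⟨i, ?_⟩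
    obtain ⟨heq, hineq⟩ := Stmt4Aux.radius_facts hn2 B i
    set β := kthLargestOffDiag B i (n / 2) with hβ
    have hrF : secondTypeRadius Fᵀ i = halfSumDiff n (sortDesc (List.ofFn fun j : Fin n =>
        if j = i then 0 else B j i - β)) := by
      have hfun : (fun j : Fin n => if j = i then (0:ℝ) else Fᵀ i j)
          = fun j : Fin n => if j = i then 0 else B j i - β := by
        funext j
        rw [Matrix.transpose_apply, hF]
      unfold secondTypeRadius
      rw [hfun]
    have hcenter : Fᵀ i i = B i i - β := by rw [Matrix.transpose_apply, hF]
    rw [secondTypeDisc, Metric.mem_closedBall] at hzi ⊢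
    have hd : dist ((Fᵀ i i : ℝ) : ℂ) ((Bᵀ i i : ℝ) : ℂ) = |β| := by
      rw [Complex.dist_eq, hcenter, Matrix.transpose_apply]
      have : ((B i i - β : ℝ) : ℂ) - ((B i i : ℝ) : ℂ) = ((-β : ℝ) : ℂ) := by push_cast; ring
      rw [this, Complex.norm_real, Real.norm_eq_abs, abs_neg]
    calc dist z ((Bᵀ i i : ℝ) : ℂ)
        ≤ dist z ((Fᵀ i i : ℝ) : ℂ) + dist ((Fᵀ i i : ℝ) : ℂ) ((Bᵀ i i : ℝ) : ℂ) :=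
          dist_triangle _ _ _
      _ ≤ secondTypeRadius Fᵀ i + |β| := by
          rw [hd]
          exact add_le_add_left hzi _
      _ = (∑ j : Fin n, |if j = i then (0:ℝ) else B j i - β|) + |β| := by rw [hrF, heq]
      _ ≤ secondTypeRadius Bᵀ i := hineq
  · -- Part 2 : eigenvalue localization
    intro mu hmu hne
    obtain ⟨v, hv0, hv⟩ := Stmt4Aux.exists_eigvec (B.map ((↑) : ℝ → ℂ)) mu hmu
    rcases Nat.eq_zero_or_pos n with rfl | hn0
    · exact absurd (funext fun x => x.elim0) hv0
    have hrow : ∀ j : Fin n, ∑ k, B j k = lam1 := by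
      intro j
      have := congrFun hB j
      simpa [Matrix.mulVec, dotProduct] using this
    have hAi : ∀ i : Fin n, ∑ j, ((B j i : ℝ) : ℂ) * v j = mu * v i := by
      intro i
      have := congrFun hv i
      simpa [Matrix.mulVec, dotProduct, Matrix.transpose_apply, Matrix.map_apply,
        mul_comm] using this
    have hS : ∑ j, v j = 0 := by
      have h1 : ∑ i : Fin n, ∑ j, ((B j i : ℝ) : ℂ) * v j = mu * ∑ j, v j := by
        rw [Finset.mul_sum]
        exact Finset.sum_congr rfl fun i _ => hAi i
      rw [Finset.sum_comm] at h1
      have h2 : ∀ j : Fin n, ∑ i, ((B j i : ℝ) : ℂ) * v j = (lam1 : ℂ) * v j := by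
        intro j
        rw [← Finset.sum_mul]
        congr 1
        rw [← Complex.ofReal_sum, hrow j]
      rw [Finset.sum_congr rfl fun j _ => h2 j, ← Finset.mul_sum] at h1
      have h3 : ((lam1 : ℂ) - mu) * (∑ j, v j) = 0 := by
        rw [sub_mul, h1, sub_self]
      rcases mul_eq_zero.mp h3 with h | h
      · exact absurd (sub_eq_zero.mp h).symm hne
      · exact h
    have hFi : ∀ i : Fin n, ∑ j, ((F j i : ℝ) : ℂ) * v j = mu * v i := by
      intro i
      have hpt : ∀ j : Fin n, ((F j i : ℝ) : ℂ) * v j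
          = ((B j i : ℝ) : ℂ) * v j - (kthLargestOffDiag B i (n / 2) : ℂ) * v j := by
        intro j
        rw [hF]
        push_cast
        ring
      rw [Finset.sum_congr rfl fun j _ => hpt j, Finset.sum_sub_distrib, ← Finset.mul_sum, hS,
        mul_zero, sub_zero, hAi i]
    obtain ⟨i, -, hmax⟩ := Finset.exists_max_image Finset.univ (fun j => ‖v j‖)
      ⟨⟨0, hn0⟩, Finset.mem_univ _⟩
    have hvipos : 0 < ‖v i‖ := by
      obtain ⟨k, hk⟩ := Function.ne_iff.mp hv0
      have h1 : 0 < ‖v k‖ := by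
        simpa using hk
      exact lt_of_lt_of_le h1 (hmax k (Finset.mem_univ _))
    have hkey : (mu - ((F i i : ℝ) : ℂ)) * v i
        = ∑ j, (if j = i then (0:ℂ) else ((F j i : ℝ) : ℂ)) * v j := by
      have hpt : ∀ j : Fin n, (if j = i then (0:ℂ) else ((F j i : ℝ) : ℂ)) * v j
          = ((F j i : ℝ) : ℂ) * v j - (if j = i then ((F j i : ℝ) : ℂ) * v j else 0) := by
        intro j
        by_cases hj : j = i <;> simp [hj]
      rw [Finset.sum_congr rfl fun j _ => hpt j, Finset.sum_sub_distrib,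
        Finset.sum_ite_eq' Finset.univ i, if_pos (Finset.mem_univ i), hFi i]
      ring
    set β := kthLargestOffDiag B i (n / 2) with hβ
    obtain ⟨heq, -⟩ := Stmt4Aux.radius_facts hn2 B i
    have hrF : secondTypeRadius Fᵀ i = halfSumDiff n (sortDesc (List.ofFn fun j : Fin n =>
        if j = i then 0 else B j i - β)) := by
      have hfun : (fun j : Fin n => if j = i then (0:ℝ) else Fᵀ i j)
          = fun j : Fin n => if j = i then 0 else B j i - β := by
        funext j
        rw [Matrix.transpose_apply, hF]
      unfold secondTypeRadius
      rw [hfun]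
    have habs : ‖mu - ((F i i : ℝ) : ℂ)‖ * ‖v i‖
        ≤ (∑ j : Fin n, |if j = i then (0:ℝ) else B j i - β|) * ‖v i‖ := by
      rw [← norm_mul, hkey]
      calc ‖∑ j, (if j = i then (0:ℂ) else ((F j i : ℝ) : ℂ)) * v j‖
          ≤ ∑ j, ‖(if j = i then (0:ℂ) else ((F j i : ℝ) : ℂ)) * v j‖ :=
            norm_sum_le _ _
        _ ≤ ∑ j : Fin n, |if j = i then (0:ℝ) else B j i - β| * ‖v i‖ := by
            refine Finset.sum_le_sum fun j _ => ?_
            rw [norm_mul]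
            have hcast : (if j = i then (0:ℂ) else ((F j i : ℝ) : ℂ))
                = ((if j = i then (0:ℝ) else B j i - β : ℝ) : ℂ) := by
              by_cases hj : j = i
              · simp [hj]
              · rw [if_neg hj, if_neg hj, hF]
            rw [hcast, Complex.norm_real, Real.norm_eq_abs]
            exact mul_le_mul_of_nonneg_left (hmax j (Finset.mem_univ _)) (abs_nonneg _)
        _ = (∑ j : Fin n, |if j = i then (0:ℝ) else B j i - β|) * ‖v i‖ :=
            (Finset.sum_mul _ _ _).symm
    have hfinal : ‖mu - ((F i i : ℝ) : ℂ)‖ ≤ secondTypeRadius Fᵀ i := by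
      have h1 : ‖mu - ((F i i : ℝ) : ℂ)‖
          ≤ ∑ j : Fin n, |if j = i then (0:ℝ) else B j i - β| :=
        le_of_mul_le_mul_right habs hvipos
      rw [hrF, heq]
      exact h1
    rw [secondTypeRegion, Set.mem_iUnion]
    refine ⟨i, ?_⟩
    rw [secondTypeDisc, Metric.mem_closedBall, Complex.dist_eq, Matrix.transpose_apply]
    exact hfinal
end

section
/- Let n be an odd integer with n ≥ 3 and let B = [b_{ij}] be an n×n real constant row-sum matrix with constant row-sum λ₁ (Be = λ₁e). For each j, let β_j and γ_j be, respectively, the opposite in sign of the ((n−1)/2)-th largest and of the ((n+1)/2)-th largest numbers among the n−1 off-diagonal entries b_{1j}, …, b_{j−1,j}, b_{j+1,j}, …, b_{nj} of column j. Let F = [b_{ij} + β_j] and G = [b_{ij} + γ_j], and set S = ∪_{j=1}^{n} (D̂_{F,j} ∩ D̂_{G,j}), where D̂_{F,j} and D̂_{G,j} are the j-th Gershgorin discs of the second type of F^T and G^T respectively (obtained from the j-th columns of F and G). Then S is contained in the Gershgorin region of the second type of B^T, and every complex eigenvalue λ of B with λ ≠ λ₁ belongs to S. -/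
open Matrix
open scoped ENNReal

lemma sortDesc_length (l : List ℝ) : (sortDesc l).length = l.length := by
  rw [sortDesc, List.length_reverse, List.length_insertionSort]

lemma sum_map_sub_const (l : List ℝ) (t : ℝ) :
    (l.map (fun x => x - t)).sum = l.sum - l.length * t := by
  induction l with
  | nil => simp
  | cons a l ih => simp [ih]; ring

lemma sum_map_const_sub (l : List ℝ) (t : ℝ) :
    (l.map (fun x => t - x)).sum = l.length * t - l.sum := by
  induction l with
  | nil => simp
  | cons a l ih => simp [ih]; ring

lemma map_sum_split (y : List ℝ) (k : ℕ) (f : ℝ → ℝ) :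
    (y.map f).sum = ((y.take k).map f).sum + ((y.drop k).map f).sum := by
  rw [← List.sum_append, ← List.map_append, List.take_append_drop]

lemma sum_abs_lb (y : List ℝ) (k : ℕ) (hk : k ≤ y.length) (t : ℝ) :
    ((y.take k).sum - (y.drop k).sum) + ((y.length : ℝ) - 2*k) * t
      ≤ (y.map fun x => |x - t|).sum := by
  have h1 : ((y.take k).map fun x => x - t).sum ≤ ((y.take k).map fun x => |x - t|).sum :=
    List.sum_le_sum fun i _ => le_abs_self _
  have h2 : ((y.drop k).map fun x => t - x).sum ≤ ((y.drop k).map fun x => |x - t|).sum :=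
    List.sum_le_sum fun i _ => by rw [abs_sub_comm]; exact le_abs_self _
  rw [sum_map_sub_const] at h1
  rw [sum_map_const_sub] at h2
  rw [map_sum_split y k]
  have l1 : (y.take k).length = k := by simp [Nat.min_eq_left hk]
  have l2 : ((y.drop k).length : ℝ) = (y.length : ℝ) - k := by
    rw [List.length_drop]; push_cast [Nat.cast_sub hk]; ring
  rw [l1] at h1
  rw [l2] at h2
  linarith

lemma sum_abs_lb_mid (y : List ℝ) (k : ℕ) (hk : k < y.length) (t : ℝ) :
    ((y.take k).sum - (y.drop (k+1)).sum) + |y[k] - t| + ((y.length : ℝ) - 2*k - 1) * t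
      ≤ (y.map fun x => |x - t|).sum := by
  have h1 : ((y.take k).map fun x => x - t).sum ≤ ((y.take k).map fun x => |x - t|).sum :=
    List.sum_le_sum fun i _ => le_abs_self _
  have h2 : ((y.drop (k+1)).map fun x => t - x).sum ≤ ((y.drop (k+1)).map fun x => |x - t|).sum :=
    List.sum_le_sum fun i _ => by rw [abs_sub_comm]; exact le_abs_self _
  rw [sum_map_sub_const] at h1
  rw [sum_map_const_sub] at h2
  rw [map_sum_split y k, List.drop_eq_getElem_cons hk, List.map_cons, List.sum_cons]
  have l1 : (y.take k).length = k := by simp [Nat.min_eq_left hk.le]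
  have l2 : ((y.drop (k+1)).length : ℝ) = (y.length : ℝ) - k - 1 := by
    rw [List.length_drop]; push_cast [Nat.cast_sub hk]; ring
  rw [l1] at h1
  rw [l2] at h2
  linarith

lemma sum_abs_eq (y : List ℝ) (k : ℕ) (hk : k ≤ y.length) (t : ℝ)
    (h1 : ∀ x ∈ y.take k, t ≤ x) (h2 : ∀ x ∈ y.drop k, x ≤ t) :
    (y.map fun x => |x - t|).sum
      = ((y.take k).sum - (y.drop k).sum) + ((y.length : ℝ) - 2*k) * t := by
  have e1 : ((y.take k).map fun x => |x - t|).sum = ((y.take k).map fun x => x - t).sum := by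
    refine congrArg List.sum (List.map_congr_left fun x hx => abs_of_nonneg ?_)
    linarith [h1 x hx]
  have e2 : ((y.drop k).map fun x => |x - t|).sum = ((y.drop k).map fun x => t - x).sum := by
    refine congrArg List.sum (List.map_congr_left fun x hx => ?_)
    rw [abs_sub_comm]
    exact abs_of_nonneg (by linarith [h2 x hx])
  rw [map_sum_split y k _, e1, e2, sum_map_sub_const, sum_map_const_sub]
  have l1 : (y.take k).length = k := by simp [Nat.min_eq_left hk]
  have l2 : ((y.drop k).length : ℝ) = (y.length : ℝ) - k := by
    rw [List.length_drop]; push_cast [Nat.cast_sub hk]; ring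
  rw [l1, l2]; ring

lemma sorted_sum_abs_getElem (y : List ℝ) (hs : y.Pairwise (· ≥ ·)) (k : ℕ) (hk : k < y.length) :
    (y.map fun x => |x - y[k]|).sum
      = ((y.take k).sum - (y.drop k).sum) + ((y.length : ℝ) - 2*k) * y[k] := by
  apply sum_abs_eq y k hk.le
  · intro x hx
    have hmem : y[k] ∈ y.drop k := by
      rw [List.drop_eq_getElem_cons hk]; exact List.mem_cons_self
    exact hs.rel_of_mem_take_of_mem_drop hx hmem
  · intro x hx
    have hd : (y.drop k).Pairwise (· ≥ ·) := hs.sublist (List.drop_sublist k y)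
    rw [List.drop_eq_getElem_cons hk] at hx hd
    rcases List.mem_cons.1 hx with h | h
    · exact le_of_eq h
    · exact List.rel_of_pairwise_cons hd h

lemma sum_take_succ' (y : List ℝ) (k : ℕ) (hk : k < y.length) :
    (y.take (k+1)).sum = (y.take k).sum + y[k] := by
  rw [← List.take_concat_get' y k hk, List.sum_append, List.sum_cons, List.sum_nil, add_zero]

lemma sum_drop_eq (y : List ℝ) (k : ℕ) (hk : k < y.length) :
    (y.drop k).sum = y[k] + (y.drop (k+1)).sum := by
  rw [List.drop_eq_getElem_cons hk, List.sum_cons]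


lemma halfSumDiff_odd (n : ℕ) (h : n % 2 = 1) (l : List ℝ) :
    halfSumDiff n l = (l.take (n / 2)).sum - (l.drop (n / 2 + 1)).sum := by
  have h1 : (n - 1) / 2 = n / 2 := by omega
  have h2 : (n + 1) / 2 = n / 2 + 1 := by omega
  rw [halfSumDiff, if_pos h, h1, h2]

lemma halfSumDiff_le_sum_abs (n : ℕ) (h : n % 2 = 1) (l : List ℝ) (hl : l.length = n) (t : ℝ) :
    halfSumDiff n (sortDesc l) ≤ (l.map fun x => |x - t|).sum := by
  have hyl : (sortDesc l).length = n := by rw [sortDesc_length, hl]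
  set y := sortDesc l with hy
  set m := n / 2 with hm
  have hmlt : m < y.length := by omega
  have hsum : (y.map fun x => |x - t|).sum = (l.map fun x => |x - t|).sum :=
    List.Perm.sum_eq (List.Perm.map _ (sortDesc_perm l))
  rw [halfSumDiff_odd n h, ← hsum]
  have hdropsum := sum_drop_eq y m hmlt
  have hn2 : n = 2 * m + 1 := by omega
  rcases le_total t y[m] with ht | ht
  · have hlb := sum_abs_lb y (m+1) (by omega) t
    rw [sum_take_succ' y m hmlt] at hlb
    have hcast : (y.length : ℝ) - 2*((m+1 : ℕ) : ℝ) = -1 := by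
      rw [hyl, hn2]; push_cast; ring
    rw [show ((m + 1 : ℕ) : ℝ) = (m : ℝ) + 1 by push_cast; ring] at hlb
    have hcast' : (y.length : ℝ) - 2*((m:ℝ)+1) = -1 := by rw [hyl, hn2]; push_cast; ring
    rw [hcast', neg_one_mul] at hlb
    linarith
  · have hlb := sum_abs_lb y m (by omega) t
    have hcast : (y.length : ℝ) - 2*(m : ℝ) = 1 := by rw [hyl, hn2]; push_cast; ring
    rw [hcast, one_mul] at hlb
    linarith

lemma exists_sum_abs_le_halfSumDiff (n : ℕ) (h : n % 2 = 1) (l : List ℝ) (hl : l.length = n) :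
    ∃ t : ℝ, (l.map fun x => |x - t|).sum ≤ halfSumDiff n (sortDesc l) := by
  have hyl : (sortDesc l).length = n := by rw [sortDesc_length, hl]
  set y := sortDesc l with hy
  set m := n / 2 with hm
  have hmlt : m < y.length := by omega
  have hn2 : n = 2 * m + 1 := by omega
  refine ⟨y[m], ?_⟩
  have hsum : (y.map fun x => |x - y[m]|).sum = (l.map fun x => |x - y[m]|).sum :=
    List.Perm.sum_eq (List.Perm.map _ (sortDesc_perm l))
  rw [← hsum, sorted_sum_abs_getElem y (by rw [hy]; exact sortDesc_sorted l) m hmlt,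
    halfSumDiff_odd n h, sum_drop_eq y m hmlt]
  have hcast : (y.length : ℝ) - 2*(m : ℝ) = 1 := by rw [hyl, hn2]; push_cast; ring
  rw [hcast, one_mul]
  linarith [le_refl (0:ℝ)]

lemma sum_map_eraseIdx (l : List ℝ) (k : ℕ) (hk : k < l.length) (f : ℝ → ℝ) :
    ((l.eraseIdx k).map f).sum = (l.map f).sum - f l[k] := by
  rw [List.eraseIdx_eq_take_drop_succ, List.map_append, List.sum_append,
    map_sum_split l k f, List.drop_eq_getElem_cons hk, List.map_cons, List.sum_cons]
  ring

lemma ofFn_erase_sum {n : ℕ} (g : Fin n → ℝ) (j : Fin n) (f : ℝ → ℝ) :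
    (((List.ofFn g).eraseIdx j.val).map f).sum = ∑ i ∈ Finset.univ.erase j, f (g i) := by
  have hj : j.val < (List.ofFn g).length := by simp [j.isLt]
  rw [sum_map_eraseIdx _ _ hj, List.map_ofFn, List.sum_ofFn]
  have h1 : (List.ofFn g)[j.val] = g j := by simp
  rw [h1]
  have := Finset.sum_erase_add Finset.univ (fun i => f (g i)) (Finset.mem_univ j)
  simp only [Function.comp] at *
  linarith

lemma ofFn_ite_sum_abs {n : ℕ} (g : Fin n → ℝ) (j : Fin n) (t : ℝ) :
    ((List.ofFn fun i => if i = j then 0 else g i).map fun x => |x - t|).sum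
      = |t| + ∑ i ∈ Finset.univ.erase j, |g i - t| := by
  rw [List.map_ofFn, List.sum_ofFn]
  have := Finset.sum_erase_add Finset.univ
    (fun i => |(if i = j then 0 else g i) - t|) (Finset.mem_univ j)
  have h2 : ∑ i ∈ Finset.univ.erase j, |(if i = j then 0 else g i) - t|
      = ∑ i ∈ Finset.univ.erase j, |g i - t| := by
    refine Finset.sum_congr rfl fun i hi => ?_
    rw [if_neg (Finset.ne_of_mem_erase hi)]
  simp only [Function.comp, eq_self_iff_true, if_true, zero_sub, abs_neg] at *
  linarith

lemma main_list (L : List ℝ) (m : ℕ) (hm : 1 ≤ m) (hL : L.length = 2*m)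
    (a b : ℝ) (ha : a = (sortDesc L).getD m 0) (hb : b = (sortDesc L).getD (m-1) 0) :
    a ≤ b ∧
    (L.map fun x => |x - b|).sum = (L.map fun x => |x - a|).sum ∧
    (∀ t, (L.map fun x => |x - a|).sum ≤ (L.map fun x => |x - t|).sum) ∧
    (∀ t, (L.map fun x => |x - a|).sum + 2*(a - t) ≤ (L.map fun x => |x - t|).sum) ∧
    (∀ t, (L.map fun x => |x - a|).sum + 2*(t - b) ≤ (L.map fun x => |x - t|).sum) := by
  have hyl : (sortDesc L).length = 2*m := by rw [sortDesc_length, hL]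
  set y := sortDesc L with hy
  have hs : y.Pairwise (· ≥ ·) := sortDesc_sorted L
  have hma : m < y.length := by omega
  have hmb : m - 1 < y.length := by omega
  have ha' : a = y[m] := by rw [ha, List.getD_eq_getElem _ _ hma]
  have hb' : b = y[m-1]'hmb := by rw [hb, List.getD_eq_getElem _ _ hmb]
  have hperm : ∀ f : ℝ → ℝ, (L.map f).sum = (y.map f).sum :=
    fun f => (List.Perm.sum_eq (List.Perm.map _ (sortDesc_perm L))).symm
  have hab : a ≤ b := by
    rw [ha', hb']
    have := hs.rel_get_of_lt (a := ⟨m-1, hmb⟩) (b := ⟨m, hma⟩) (by simp; omega)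
    simpa using this
  -- basic sums
  have hdrop : (y.drop m).sum = a + (y.drop (m+1)).sum := by rw [sum_drop_eq y m hma, ha']
  have hm1 : m - 1 + 1 = m := by omega
  have hdrop1 : (y.drop (m-1)).sum = b + (y.drop m).sum := by
    have := sum_drop_eq y (m-1) hmb
    rw [hm1] at this; rw [this, hb']
  have htake : (y.take m).sum = (y.take (m-1)).sum + b := by
    have := sum_take_succ' y (m-1) hmb
    rw [hm1] at this; rw [this, hb']
  have hPhi : (L.map fun x => |x - a|).sum = (y.take m).sum - (y.drop m).sum := by
    rw [hperm, ha', sorted_sum_abs_getElem y hs m hma, hyl]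
    push_cast; ring
  refine ⟨hab, ?_, ?_, ?_, ?_⟩
  · rw [hperm, hPhi, hb', sorted_sum_abs_getElem y hs (m-1) hmb, hyl, ← hb']
    push_cast [Nat.cast_sub hm]
    ring_nf
    ring_nf at htake hdrop1
    linarith [hdrop1, htake]
  · intro t
    have hlb := sum_abs_lb y m (by omega) t
    rw [hyl] at hlb
    rw [show ((2*m : ℕ) : ℝ) - 2*(m:ℕ) = 0 by push_cast; ring, zero_mul, add_zero] at hlb
    rw [hperm (fun x => |x - t|), hPhi]
    exact hlb
  · intro t
    have hlb := sum_abs_lb_mid y m hma t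
    have habs : a - t ≤ |y[m] - t| := by rw [← ha']; exact le_abs_self _
    rw [hyl] at hlb
    rw [show ((2*m : ℕ) : ℝ) - 2*(m:ℕ) - 1 = -1 by push_cast; ring, neg_one_mul] at hlb
    rw [hperm (fun x => |x - t|), hPhi]
    linarith [hdrop, habs, hlb]
  · intro t
    have hlb := sum_abs_lb_mid y (m-1) hmb t
    have habs : t - b ≤ |y[m-1]'hmb - t| := by rw [← hb', abs_sub_comm]; exact le_abs_self _
    rw [hyl, hm1] at hlb
    rw [show ((2*m : ℕ) : ℝ) - 2*((m-1:ℕ):ℝ) - 1 = 1 by push_cast [Nat.cast_sub hm]; ring,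
      one_mul] at hlb
    rw [hperm (fun x => |x - t|), hPhi]
    linarith [htake, habs, hlb]

lemma geom_lemma (w : ℂ) (a b Phi R Et t0 : ℝ) (hab : a ≤ b)
    (h1 : ‖w + (b:ℂ)‖ ≤ Phi) (h2 : ‖w + (a:ℂ)‖ ≤ Phi)
    (hR : |t0| + Et ≤ R)
    (e1 : Phi ≤ Et) (e2 : Phi + 2*(a - t0) ≤ Et) (e3 : Phi + 2*(t0 - b) ≤ Et) :
    ‖w‖ ≤ R := by
  have hta : |t0| ≥ t0 := le_abs_self _
  have htn : |t0| ≥ -t0 := neg_le_abs _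
  have ht0 : |t0| ≥ 0 := abs_nonneg _
  rcases lt_or_ge 0 a with ha0 | ha0
  · -- 0 < a ≤ b
    have hw : ‖w‖ ≤ Phi + a := by
      calc ‖w‖ = ‖(w + (a:ℂ)) - (a:ℂ)‖ := by ring_nf
        _ ≤ ‖w + (a:ℂ)‖ + ‖(a:ℂ)‖ := norm_sub_le _ _
        _ ≤ Phi + a := by
            rw [Complex.norm_real, Real.norm_eq_abs, abs_of_pos ha0]
            linarith
    rcases le_total a t0 with h | h
    · linarith
    · linarith
  rcases lt_or_ge b 0 with hb0 | hb0
  · -- a ≤ b < 0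
    have hw : ‖w‖ ≤ Phi - b := by
      calc ‖w‖ = ‖(w + (b:ℂ)) - (b:ℂ)‖ := by ring_nf
        _ ≤ ‖w + (b:ℂ)‖ + ‖(b:ℂ)‖ := norm_sub_le _ _
        _ ≤ Phi - b := by
            rw [Complex.norm_real, Real.norm_eq_abs, abs_of_neg hb0]
            linarith
    rcases le_total t0 b with h | h
    · linarith
    · linarith
  · -- a ≤ 0 ≤ b
    have hw : ‖w‖ ≤ Phi := by
      rcases eq_or_lt_of_le hab with rfl | hlt
      · -- a = b; both 0 since a ≤ 0 ≤ a
        have : a = 0 := le_antisymm ha0 hb0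
        subst this
        simpa using h2
      · set θ : ℝ := -a / (b - a) with hθ
        have hba : 0 < b - a := by linarith
        have hθ0 : 0 ≤ θ := div_nonneg (by linarith) (le_of_lt hba)
        have hθ1 : θ ≤ 1 := by
          rw [hθ, div_le_one hba]; linarith
        have hcoef : θ * b + (1 - θ) * a = 0 := by
          rw [hθ]
          field_simp
          ring
        have hwsum : w = (θ:ℂ) * (w + b) + ((1 - θ :ℝ):ℂ) * (w + a) := by
          have key : (θ:ℂ) * (w + b) + ((1 - θ :ℝ):ℂ) * (w + a)
              = ((θ + (1 - θ) : ℝ):ℂ) * w + ((θ * b + (1 - θ) * a : ℝ):ℂ) := by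
            push_cast; ring
          rw [key, hcoef]
          push_cast
          ring
        calc ‖w‖ ≤ ‖(θ:ℂ) * (w + b)‖ + ‖((1 - θ:ℝ):ℂ) * (w + a)‖ := by
              conv_lhs => rw [hwsum]
              exact norm_add_le _ _
          _ = θ * ‖w + (b:ℂ)‖ + (1 - θ) * ‖w + (a:ℂ)‖ := by
              rw [norm_mul, norm_mul, Complex.norm_real, Complex.norm_real,
                Real.norm_eq_abs, Real.norm_eq_abs, abs_of_nonneg hθ0,
                abs_of_nonneg (by linarith : (0:ℝ) ≤ 1 - θ)]
          _ ≤ θ * Phi + (1 - θ) * Phi := by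
              apply add_le_add
              · exact mul_le_mul_of_nonneg_left h1 hθ0
              · exact mul_le_mul_of_nonneg_left h2 (by linarith)
          _ = Phi := by ring
    linarith

open Matrix in
lemma charpoly_root_det {n : ℕ} (M : Matrix (Fin n) (Fin n) ℂ) (μ : ℂ)
    (h : M.charpoly.IsRoot μ) : (μ • (1 : Matrix (Fin n) (Fin n) ℂ) - M).det = 0 := by
  have : Polynomial.eval μ M.charpoly = ((charmatrix M).map (Polynomial.evalRingHom μ)).det := by
    rw [Matrix.charpoly]
    show (Polynomial.evalRingHom μ) M.charmatrix.det = _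
    rw [RingHom.map_det, RingHom.mapMatrix_apply]
  have hmap : (charmatrix M).map (Polynomial.evalRingHom μ)
      = μ • (1 : Matrix (Fin n) (Fin n) ℂ) - M := by
    ext i j
    by_cases hij : i = j
    · subst hij
      simp [Matrix.charmatrix_apply_eq, Matrix.one_apply]
    · simp [Matrix.charmatrix_apply_ne _ _ _ hij, Matrix.one_apply, hij]
  rw [Polynomial.IsRoot] at h
  rw [this, hmap] at h
  exact h

open Matrix in
lemma exists_left_eigvec {n : ℕ} (M : Matrix (Fin n) (Fin n) ℂ) (μ : ℂ)
    (h : M.charpoly.IsRoot μ) :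
    ∃ v : Fin n → ℂ, v ≠ 0 ∧ ∀ i, ∑ k, M k i * v k = μ * v i := by
  have hdet : (μ • (1 : Matrix (Fin n) (Fin n) ℂ) - Mᵀ).det = 0 := by
    have h1 := charpoly_root_det M μ h
    have h2 : (μ • (1 : Matrix (Fin n) (Fin n) ℂ) - Mᵀ) =
        (μ • (1 : Matrix (Fin n) (Fin n) ℂ) - M)ᵀ := by
      rw [Matrix.transpose_sub, Matrix.transpose_smul, Matrix.transpose_one]
    rw [h2, Matrix.det_transpose]
    exact h1
  obtain ⟨v, hv0, hv⟩ := Matrix.exists_mulVec_eq_zero_iff.2 hdet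
  refine ⟨v, hv0, fun i => ?_⟩
  have := congrFun hv i
  rw [Matrix.sub_mulVec, Matrix.smul_mulVec, Matrix.one_mulVec] at this
  have h3 : (μ • v) i - (Mᵀ *ᵥ v) i = 0 := this
  rw [Matrix.mulVec, dotProduct] at h3
  simp only [Matrix.transpose_apply, Pi.smul_apply, smul_eq_mul] at h3
  linear_combination -h3


open Matrix in
lemma key2 {n : ℕ} (hodd : n % 2 = 1) (M : Matrix (Fin n) (Fin n) ℝ) (μ : ℂ)
    (v : Fin n → ℂ) (i0 : Fin n) (hmax : ∀ k, ‖v k‖ ≤ ‖v i0‖) (h0 : v i0 ≠ 0)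
    (hsum : ∑ k, v k = 0)
    (heig : ∑ k, (M k i0 : ℂ) * v k = μ * v i0) :
    μ ∈ secondTypeDisc Mᵀ i0 := by
  set g : Fin n → ℝ := fun k => M k i0 with hg
  set l : List ℝ := List.ofFn (fun k => if k = i0 then 0 else g k) with hl
  have hlen : l.length = n := by rw [hl, List.length_ofFn]
  obtain ⟨t, ht⟩ := exists_sum_abs_le_halfSumDiff n hodd l hlen
  have hlist : (List.ofFn fun j : Fin n => if j = i0 then 0 else Mᵀ i0 j) = l := by
    rw [hl]
    exact congrArg List.ofFn (funext fun j => by rw [Matrix.transpose_apply])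
  have hrad : secondTypeRadius Mᵀ i0 = halfSumDiff n (sortDesc l) := by
    rw [secondTypeRadius, hlist]
  have hsumabs := ofFn_ite_sum_abs g i0 t
  rw [← hl] at hsumabs
  -- key identity
  have hkey : (μ - (g i0 : ℂ) + (t:ℂ)) * v i0
      = ∑ k ∈ Finset.univ.erase i0, ((g k - t : ℝ):ℂ) * v k := by
    have e1 : ∑ k ∈ Finset.univ.erase i0, ((g k : ℝ):ℂ) * v k
        = μ * v i0 - (g i0 : ℂ) * v i0 := by
      have := Finset.sum_erase_add Finset.univ (fun k => ((g k : ℝ):ℂ) * v k)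
        (Finset.mem_univ i0)
      rw [hg] at this ⊢
      simp only at this ⊢
      rw [← heig] at *
      linear_combination this
    have e2 : ∑ k ∈ Finset.univ.erase i0, v k = - v i0 := by
      have := Finset.sum_erase_add Finset.univ v (Finset.mem_univ i0)
      rw [hsum] at this
      linear_combination this
    have e3 : ∑ k ∈ Finset.univ.erase i0, ((g k - t : ℝ):ℂ) * v k
        = (∑ k ∈ Finset.univ.erase i0, ((g k : ℝ):ℂ) * v k)
          - (t:ℂ) * ∑ k ∈ Finset.univ.erase i0, v k := by
      rw [Finset.mul_sum, ← Finset.sum_sub_distrib]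
      refine Finset.sum_congr rfl fun k _ => ?_
      push_cast
      ring
    rw [e3, e1, e2]
    ring
  have hnorm1 : ‖μ - (g i0 : ℂ) + (t:ℂ)‖ * ‖v i0‖
      ≤ (∑ k ∈ Finset.univ.erase i0, |g k - t|) * ‖v i0‖ := by
    rw [← norm_mul, hkey]
    calc ‖∑ k ∈ Finset.univ.erase i0, ((g k - t : ℝ):ℂ) * v k‖
        ≤ ∑ k ∈ Finset.univ.erase i0, ‖((g k - t : ℝ):ℂ) * v k‖ := norm_sum_le _ _
      _ ≤ ∑ k ∈ Finset.univ.erase i0, |g k - t| * ‖v i0‖ := by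
          refine Finset.sum_le_sum fun k _ => ?_
          rw [norm_mul, Complex.norm_real, Real.norm_eq_abs]
          exact mul_le_mul_of_nonneg_left (hmax k) (abs_nonneg _)
      _ = (∑ k ∈ Finset.univ.erase i0, |g k - t|) * ‖v i0‖ := by
          rw [Finset.sum_mul]
  have hvpos : 0 < ‖v i0‖ := norm_pos_iff.2 h0
  have hnorm2 : ‖μ - (g i0 : ℂ) + (t:ℂ)‖ ≤ ∑ k ∈ Finset.univ.erase i0, |g k - t| :=
    le_of_mul_le_mul_right (by linarith [hnorm1]) hvpos
  have hfinal : dist μ ((g i0 : ℝ):ℂ) ≤ halfSumDiff n (sortDesc l) := by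
    rw [Complex.dist_eq]
    calc ‖μ - (g i0 : ℂ)‖ = ‖(μ - (g i0 : ℂ) + (t:ℂ)) - (t:ℂ)‖ := by ring_nf
      _ ≤ ‖μ - (g i0 : ℂ) + (t:ℂ)‖ + ‖(t:ℂ)‖ := norm_sub_le _ _
      _ ≤ (∑ k ∈ Finset.univ.erase i0, |g k - t|) + |t| := by
          rw [Complex.norm_real, Real.norm_eq_abs]
          linarith [hnorm2]
      _ = (l.map fun x => |x - t|).sum := by rw [hsumabs]; ring
      _ ≤ halfSumDiff n (sortDesc l) := ht
  show μ ∈ Metric.closedBall ((Mᵀ i0 i0 : ℝ):ℂ) (secondTypeRadius Mᵀ i0)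
  rw [Metric.mem_closedBall, hrad]
  have : (Mᵀ i0 i0 : ℝ) = g i0 := by rw [Matrix.transpose_apply, hg]
  rw [this]
  exact hfinal


open Matrix in
lemma part1_disc {n : ℕ} (hodd : n % 2 = 1) (hn : 3 ≤ n) (B F G : Matrix (Fin n) (Fin n) ℝ)
    (hF : ∀ i j, F i j = B i j + -kthLargestOffDiag B j ((n - 1) / 2))
    (hG : ∀ i j, G i j = B i j + -kthLargestOffDiag B j ((n + 1) / 2))
    (j : Fin n) :
    secondTypeDisc Fᵀ j ∩ secondTypeDisc Gᵀ j ⊆ secondTypeDisc Bᵀ j := by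
  set m := n / 2 with hmdef
  have hn2 : n = 2*m + 1 := by omega
  have hm : 1 ≤ m := by omega
  set L : List ℝ := (List.ofFn fun i : Fin n => B i j).eraseIdx j.val with hL
  have hLlen : L.length = 2*m := by
    rw [hL]
    have hj : j.val < (List.ofFn fun i : Fin n => B i j).length := by
      rw [List.length_ofFn]; exact j.isLt
    have h2 := List.length_eraseIdx_add_one hj
    rw [List.length_ofFn] at h2
    omega
  set b : ℝ := kthLargestOffDiag B j ((n - 1) / 2) with hbdef
  set a : ℝ := kthLargestOffDiag B j ((n + 1) / 2) with hadef
  have ha' : a = (sortDesc L).getD m 0 := by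
    rw [hadef, kthLargestOffDiag]
    congr 1
    omega
  have hb' : b = (sortDesc L).getD (m-1) 0 := by
    rw [hbdef, kthLargestOffDiag]
    congr 1
    omega
  obtain ⟨hab, hEb, hlow1, hlow2, hlow3⟩ := main_list L m hm hLlen a b ha' hb'
  set Phi : ℝ := (L.map fun x => |x - a|).sum with hPhidef
  have hErase : ∀ f : ℝ → ℝ, (L.map f).sum = ∑ i ∈ Finset.univ.erase j, f (B i j) :=
    fun f => ofFn_erase_sum (fun i => B i j) j f
  -- F radius bound
  have hFlist : (List.ofFn fun i : Fin n => if i = j then 0 else Fᵀ j i)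
      = List.ofFn fun i : Fin n => if i = j then 0 else B i j - b := by
    refine congrArg List.ofFn (funext fun i => ?_)
    rw [Matrix.transpose_apply, hF i j, ← hbdef, sub_eq_add_neg]
  have hrF : secondTypeRadius Fᵀ j ≤ Phi := by
    rw [secondTypeRadius, hFlist]
    calc halfSumDiff n (sortDesc (List.ofFn fun i : Fin n => if i = j then 0 else B i j - b))
        ≤ ((List.ofFn fun i : Fin n => if i = j then 0 else B i j - b).map
            fun x => |x - 0|).sum :=
          halfSumDiff_le_sum_abs n hodd _ (by rw [List.length_ofFn]) 0
      _ = |(0:ℝ)| + ∑ i ∈ Finset.univ.erase j, |B i j - b - 0| :=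
          ofFn_ite_sum_abs (fun i => B i j - b) j 0
      _ = (L.map fun x => |x - b|).sum := by
          rw [hErase (fun x => |x - b|)]
          simp only [abs_zero, sub_zero, zero_add]
      _ = Phi := hEb
  have hGlist : (List.ofFn fun i : Fin n => if i = j then 0 else Gᵀ j i)
      = List.ofFn fun i : Fin n => if i = j then 0 else B i j - a := by
    refine congrArg List.ofFn (funext fun i => ?_)
    rw [Matrix.transpose_apply, hG i j, ← hadef, sub_eq_add_neg]
  have hrG : secondTypeRadius Gᵀ j ≤ Phi := by
    rw [secondTypeRadius, hGlist]
    calc halfSumDiff n (sortDesc (List.ofFn fun i : Fin n => if i = j then 0 else B i j - a))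
        ≤ ((List.ofFn fun i : Fin n => if i = j then 0 else B i j - a).map
            fun x => |x - 0|).sum :=
          halfSumDiff_le_sum_abs n hodd _ (by rw [List.length_ofFn]) 0
      _ = |(0:ℝ)| + ∑ i ∈ Finset.univ.erase j, |B i j - a - 0| :=
          ofFn_ite_sum_abs (fun i => B i j - a) j 0
      _ = (L.map fun x => |x - a|).sum := by
          rw [hErase (fun x => |x - a|)]
          simp only [abs_zero, sub_zero, zero_add]
  -- B radius lower bound
  have hBlist : (List.ofFn fun i : Fin n => if i = j then 0 else Bᵀ j i)
      = List.ofFn fun i : Fin n => if i = j then 0 else B i j := by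
    refine congrArg List.ofFn (funext fun i => ?_)
    rw [Matrix.transpose_apply]
  obtain ⟨t0, ht0⟩ := exists_sum_abs_le_halfSumDiff n hodd
    (List.ofFn fun i : Fin n => if i = j then 0 else B i j) (by rw [List.length_ofFn])
  have hrB : |t0| + (L.map fun x => |x - t0|).sum ≤ secondTypeRadius Bᵀ j := by
    rw [secondTypeRadius, hBlist]
    calc |t0| + (L.map fun x => |x - t0|).sum
        = |(0:ℝ) - t0| + ∑ i ∈ Finset.univ.erase j, |B i j - t0| := by
          rw [hErase (fun x => |x - t0|), zero_sub, abs_neg]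
      _ = ((List.ofFn fun i : Fin n => if i = j then 0 else B i j).map
            fun x => |x - t0|).sum := by
          rw [ofFn_ite_sum_abs (fun i => B i j) j t0, zero_sub, abs_neg]
      _ ≤ _ := ht0
  -- assemble
  intro z hz
  obtain ⟨hzF, hzG⟩ := hz
  rw [secondTypeDisc, Metric.mem_closedBall, Complex.dist_eq] at hzF hzG
  show z ∈ Metric.closedBall ((Bᵀ j j : ℝ):ℂ) (secondTypeRadius Bᵀ j)
  rw [Metric.mem_closedBall, Complex.dist_eq]
  have hcB : (Bᵀ j j : ℝ) = B j j := Matrix.transpose_apply B j j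
  have hcF : (Fᵀ j j : ℝ) = B j j - b := by
    rw [Matrix.transpose_apply, hF j j, ← hbdef]; ring
  have hcG : (Gᵀ j j : ℝ) = B j j - a := by
    rw [Matrix.transpose_apply, hG j j, ← hadef]; ring
  rw [hcF] at hzF
  rw [hcG] at hzG
  rw [hcB]
  set w : ℂ := z - ((B j j : ℝ):ℂ) with hw
  have h1 : ‖w + (b:ℂ)‖ ≤ Phi := by
    refine le_trans (le_of_eq ?_) (le_trans hzF hrF)
    rw [hw]
    congr 1
    push_cast
    ring
  have h2 : ‖w + (a:ℂ)‖ ≤ Phi := by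
    refine le_trans (le_of_eq ?_) (le_trans hzG hrG)
    rw [hw]
    congr 1
    push_cast
    ring
  exact geom_lemma w a b Phi (secondTypeRadius Bᵀ j) ((L.map fun x => |x - t0|).sum) t0
    hab h1 h2 hrB (hlow1 t0) (hlow2 t0) (hlow3 t0)

/-- Theorem 5: for `n` odd, `n ≥ 3`, and `B` constant row-sum with row
sum `λ₁`, with `F` and `G` built from the negatives of the `((n-1)/2)`-th and
`((n+1)/2)`-th largest off-diagonal column entries, the set
`S = ⋃_j (D̂_{F,j} ∩ D̂_{G,j})` is contained in the Gershgorin region of the second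
type of `Bᵀ` and contains every eigenvalue of `B` other than `λ₁`. -/
theorem stmt5 {n : ℕ} (hodd : Odd n) (hn : 3 ≤ n) (B : Matrix (Fin n) (Fin n) ℝ)
    (lam1 : ℝ) (hB : B *ᵥ (1 : Fin n → ℝ) = lam1 • (1 : Fin n → ℝ))
    (F G : Matrix (Fin n) (Fin n) ℝ)
    (hF : ∀ i j, F i j = B i j + -kthLargestOffDiag B j ((n - 1) / 2))
    (hG : ∀ i j, G i j = B i j + -kthLargestOffDiag B j ((n + 1) / 2))
    (S : Set ℂ) (hS : S = ⋃ j : Fin n, secondTypeDisc Fᵀ j ∩ secondTypeDisc Gᵀ j) :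
    S ⊆ secondTypeRegion Bᵀ ∧
      ∀ mu : ℂ, IsEigenvalueC B mu → mu ≠ (lam1 : ℂ) → mu ∈ S := by
  have hodd' : n % 2 = 1 := Nat.odd_iff.1 hodd
  have hodd'' : n % 2 = 1 := hodd'
  constructor
  · rw [hS]
    intro z hz
    rw [Set.mem_iUnion] at hz
    obtain ⟨j, hzj⟩ := hz
    exact Set.mem_iUnion.2 ⟨j, part1_disc hodd' hn B F G hF hG j hzj⟩
  · intro mu hmu hne
    obtain ⟨v, hv0, hv⟩ := exists_left_eigvec (B.map ((↑) : ℝ → ℂ)) mu hmu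
    have hvB : ∀ i, ∑ k, ((B k i : ℝ):ℂ) * v k = mu * v i := by
      intro i
      have := hv i
      simpa [Matrix.map_apply] using this
    have hrow : ∀ k, ∑ i, B k i = lam1 := by
      intro k
      have := congrFun hB k
      simpa [Matrix.mulVec, dotProduct] using this
    have hsum : ∑ k, v k = 0 := by
      have h1 : ∑ i, mu * v i = ∑ i, ∑ k, ((B k i : ℝ):ℂ) * v k :=
        (Finset.sum_congr rfl fun i _ => (hvB i).symm)
      rw [Finset.sum_comm] at h1
      have h2 : ∀ k : Fin n, ∑ i, ((B k i : ℝ):ℂ) * v k = (lam1 : ℂ) * v k := by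
        intro k
        rw [← Finset.sum_mul]
        congr 1
        have : ((∑ i, B k i : ℝ) : ℂ) = ∑ i, ((B k i : ℝ):ℂ) := by push_cast; rfl
        rw [← this, hrow k]
      rw [Finset.sum_congr rfl fun k _ => h2 k] at h1
      rw [← Finset.mul_sum, ← Finset.mul_sum] at h1
      have h3 : (mu - (lam1:ℂ)) * ∑ k, v k = 0 := by linear_combination h1
      rcases mul_eq_zero.1 h3 with h | h
      · exact absurd (by linear_combination h) hne
      · exact h
    haveI : Nonempty (Fin n) := ⟨⟨0, by omega⟩⟩
    obtain ⟨i0, hi0⟩ := Finite.exists_max (fun k => ‖v k‖)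
    have h0 : v i0 ≠ 0 := by
      intro h
      apply hv0
      funext k
      have := hi0 k
      rw [h, norm_zero] at this
      exact norm_le_zero_iff.1 this
    have heigF : ∑ k, ((F k i0 : ℝ):ℂ) * v k = mu * v i0 := by
      have : ∀ k, ((F k i0 : ℝ):ℂ) * v k
          = ((B k i0 : ℝ):ℂ) * v k + (-(kthLargestOffDiag B i0 ((n-1)/2) : ℝ):ℂ) * v k := by
        intro k
        rw [hF k i0]
        push_cast
        ring
      rw [Finset.sum_congr rfl fun k _ => this k, Finset.sum_add_distrib, ← Finset.mul_sum,
        hsum, mul_zero, add_zero]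
      exact hvB i0
    have heigG : ∑ k, ((G k i0 : ℝ):ℂ) * v k = mu * v i0 := by
      have : ∀ k, ((G k i0 : ℝ):ℂ) * v k
          = ((B k i0 : ℝ):ℂ) * v k + (-(kthLargestOffDiag B i0 ((n+1)/2) : ℝ):ℂ) * v k := by
        intro k
        rw [hG k i0]
        push_cast
        ring
      rw [Finset.sum_congr rfl fun k _ => this k, Finset.sum_add_distrib, ← Finset.mul_sum,
        hsum, mul_zero, add_zero]
      exact hvB i0
    have hFmem := key2 hodd' F mu v i0 hi0 h0 hsum heigF
    have hGmem := key2 hodd' G mu v i0 hi0 h0 hsum heigG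
    rw [hS]
    exact Set.mem_iUnion.2 ⟨i0, ⟨hFmem, hGmem⟩⟩
end

section
/- Let n be an odd integer with n ≥ 3 and let B = [b_{ij}] be an n×n real constant row-sum matrix with constant row-sum λ₁ (Be = λ₁e). For each j, let β_j and γ_j be, respectively, the opposite in sign of the ((n−1)/2)-th largest and of the ((n+1)/2)-th largest numbers among the n−1 off-diagonal entries b_{1j}, …, b_{j−1,j}, b_{j+1,j}, …, b_{nj} of column j, and let F = [b_{ij} + β_j] and G = [b_{ij} + γ_j]. Then every complex eigenvalue of B different from λ₁ lies in the intersection of the Gershgorin region of the second type of F^T with the Gershgorin region of the second type of G^T. -/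
open Matrix
open scoped ENNReal

section Aux

lemma sum_map_sub_const_s6 (t : List ℝ) (c : ℝ) :
    (t.map (fun y => y - c)).sum = t.sum - t.length * c := by
  induction t with
  | nil => simp
  | cons a t ih => simp [ih]; ring

lemma sum_map_const_sub_s6 (t : List ℝ) (c : ℝ) :
    (t.map (fun y => c - y)).sum = t.length * c - t.sum := by
  induction t with
  | nil => simp
  | cons a t ih => simp [ih]; ring

/-- Key: for odd n, the sum of |x j - c| where c is the median equals halfSumDiff. -/
lemma exists_median_sum_eq {n : ℕ} (hodd : n % 2 = 1) (x : Fin n → ℝ) :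
    ∃ c : ℝ, ∑ j, |x j - c| = halfSumDiff n (sortDesc (List.ofFn x)) := by
  set l := sortDesc (List.ofFn x) with hl
  have hlen : l.length = n := by simp [hl, sortDesc_length]
  set m := (n - 1) / 2 with hm
  have hn2 : n = 2 * m + 1 := by omega
  have hmlt : m < l.length := by omega
  set c := l[m] with hc
  have hsort := (sortDesc_sorted (List.ofFn x))
  rw [← hl] at hsort
  have hpair := List.pairwise_iff_getElem.1 hsort
  refine ⟨c, ?_⟩
  -- LHS as a list sum over l
  have hperm : (List.ofFn x).Perm l := (sortDesc_perm _).symm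
  have h1 : ∑ j, |x j - c| = ((List.ofFn x).map (fun y => |y - c|)).sum := by
    rw [List.map_ofFn, List.sum_ofFn]; rfl
  have h2 : ((List.ofFn x).map (fun y => |y - c|)).sum
      = (l.map (fun y => |y - c|)).sum := (hperm.map _).sum_eq
  -- decompose l
  have hdecomp : l = l.take m ++ (c :: l.drop (m + 1)) := by
    conv_lhs => rw [← List.take_append_drop m l]
    rw [List.drop_eq_getElem_cons hmlt]
  have htake_len : (l.take m).length = m := by
    rw [List.length_take]; omega
  have hdrop_len : (l.drop (m + 1)).length = m := by
    rw [List.length_drop]; omega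
  have htake_ge : ∀ y ∈ l.take m, c ≤ y := by
    intro y hy
    obtain ⟨j, hj, rfl⟩ := List.getElem_of_mem hy
    rw [List.getElem_take]
    have hjm : j < m := by simpa [htake_len] using hj
    exact hpair j m (by omega) hmlt hjm
  have hdrop_le : ∀ y ∈ l.drop (m + 1), y ≤ c := by
    intro y hy
    obtain ⟨j, hj, rfl⟩ := List.getElem_of_mem hy
    rw [List.getElem_drop]
    have : m + 1 + j < l.length := by
      rw [List.length_drop] at hj; omega
    exact hpair m (m + 1 + j) hmlt this (by omega)
  have h3 : (l.map (fun y => |y - c|)).sum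
      = (l.take m).sum - (l.drop (m + 1)).sum := by
    conv_lhs => rw [hdecomp]
    rw [List.map_append, List.sum_append, List.map_cons, List.sum_cons]
    have e1 : ((l.take m).map (fun y => |y - c|)).sum = (l.take m).sum - m * c := by
      rw [List.map_congr_left (fun a ha => abs_of_nonneg (by linarith [htake_ge a ha]))]
      rw [sum_map_sub_const_s6, htake_len]
    have e2 : ((l.drop (m + 1)).map (fun y => |y - c|)).sum
        = m * c - (l.drop (m + 1)).sum := by
      rw [List.map_congr_left (fun a ha => ?_)]
      · rw [sum_map_const_sub_s6, hdrop_len]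
      · rw [abs_sub_comm]
        exact abs_of_nonneg (by linarith [hdrop_le a ha])
    rw [e1, e2, sub_self, abs_zero]
    ring
  rw [h1, h2, h3, halfSumDiff, if_pos hodd, ← hm]
  have : (n + 1) / 2 = m + 1 := by omega
  rw [this]

/-- Second-type Gershgorin for eigenvectors summing to zero. -/
lemma mem_secondTypeRegion {n : ℕ} (hodd : n % 2 = 1) (M : Matrix (Fin n) (Fin n) ℝ)
    (μ : ℂ) (v : Fin n → ℂ) (hv : v ≠ 0) (hsum : ∑ j, v j = 0)
    (heig : (M.map ((↑) : ℝ → ℂ)) *ᵥ v = μ • v) : μ ∈ secondTypeRegion M := by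
  have hn0 : 0 < n := by omega
  have : Nonempty (Fin n) := ⟨⟨0, hn0⟩⟩
  obtain ⟨i, -, hmax⟩ := Finset.exists_max_image Finset.univ
    (fun j => ‖v j‖) Finset.univ_nonempty
  have hvi : v i ≠ 0 := by
    obtain ⟨j, hj⟩ := Function.ne_iff.1 hv
    intro h
    have h1 : 0 < ‖v j‖ := by
      simpa [norm_pos_iff] using hj
    have h2 := hmax j (Finset.mem_univ j)
    rw [h] at h2
    simp at h2
    exact hj h2
  set x : Fin n → ℝ := fun j => if j = i then 0 else M i j with hx
  obtain ⟨c, hc⟩ := exists_median_sum_eq hodd x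
  have hrow : ∑ j, (M i j : ℂ) * v j = μ * v i := by
    have := congrFun heig i
    simpa [Matrix.mulVec, dotProduct, Matrix.map_apply] using this
  have hxsum : ∑ j, ((x j : ℂ) - c) * v j = (μ - M i i) * v i := by
    have e1 : ∑ j, ((x j : ℂ) - c) * v j
        = ∑ j, (x j : ℂ) * v j - c * ∑ j, v j := by
      rw [Finset.mul_sum, ← Finset.sum_sub_distrib]
      congr 1; ext j; ring
    have e2 : ∑ j, (x j : ℂ) * v j = ∑ j, (M i j : ℂ) * v j - (M i i : ℂ) * v i := by
      have : ∀ j, (x j : ℂ) * v j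
          = (M i j : ℂ) * v j - (if j = i then (M i j : ℂ) * v j else 0) := by
        intro j
        by_cases h : j = i <;> simp [hx, h]
      rw [Finset.sum_congr rfl (fun j _ => this j), Finset.sum_sub_distrib,
        Finset.sum_ite_eq' Finset.univ i (fun j => (M i j : ℂ) * v j)]
      simp
    rw [e1, e2, hrow, hsum]
    ring
  refine Set.mem_iUnion.2 ⟨i, ?_⟩
  rw [secondTypeDisc, Metric.mem_closedBall, Complex.dist_eq, secondTypeRadius, ← hx, ← hc]
  have hbound : ‖μ - M i i‖ * ‖v i‖
      ≤ (∑ j, |x j - c|) * ‖v i‖ := by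
    rw [← norm_mul, ← hxsum]
    calc ‖∑ j, ((x j : ℂ) - c) * v j‖
        ≤ ∑ j, ‖((x j : ℂ) - c) * v j‖ :=
          norm_sum_le _ _
      _ ≤ ∑ j, |x j - c| * ‖v i‖ := by
          refine Finset.sum_le_sum (fun j _ => ?_)
          rw [norm_mul]
          have : ‖(x j : ℂ) - (c : ℂ)‖ = |x j - c| := by
            rw [← Complex.ofReal_sub, Complex.norm_real, Real.norm_eq_abs]
          rw [this]
          exact mul_le_mul_of_nonneg_left (hmax j (Finset.mem_univ j)) (abs_nonneg _)
      _ = (∑ j, |x j - c|) * ‖v i‖ := by rw [Finset.sum_mul]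
  have hpos : 0 < ‖v i‖ := by simpa [norm_pos_iff] using hvi
  exact le_of_mul_le_mul_right hbound hpos

lemma eval_charpoly' {n : ℕ} (M : Matrix (Fin n) (Fin n) ℂ) (t : ℂ) :
    M.charpoly.eval t = (t • (1 : Matrix (Fin n) (Fin n) ℂ) - M).det := by
  rw [Matrix.charpoly, ← Polynomial.coe_evalRingHom, RingHom.map_det]
  congr 1
  ext i j
  by_cases h : i = j <;>
    simp [h, Matrix.charmatrix_apply, Matrix.one_apply, Matrix.diagonal_apply,
      Matrix.smul_apply]

theorem stmt6' {n : ℕ} (hodd : Odd n) (hn : 3 ≤ n) (B : Matrix (Fin n) (Fin n) ℝ)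
    (lam1 : ℝ) (hB : B *ᵥ (1 : Fin n → ℝ) = lam1 • (1 : Fin n → ℝ))
    (beta gamma : Fin n → ℝ)
    (F G : Matrix (Fin n) (Fin n) ℝ)
    (hF : ∀ i j, F i j = B i j + beta j)
    (hG : ∀ i j, G i j = B i j + gamma j)
    (mu : ℂ) (hmu : IsEigenvalueC B mu) (hne : mu ≠ (lam1 : ℂ)) :
    mu ∈ secondTypeRegion Fᵀ ∩ secondTypeRegion Gᵀ := by
  have hodd' : n % 2 = 1 := Nat.odd_iff.1 hodd
  set A := B.map ((↑) : ℝ → ℂ) with hA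
  have hdet : (mu • (1 : Matrix (Fin n) (Fin n) ℂ) - Aᵀ).det = 0 := by
    have h0 : (mu • (1 : Matrix (Fin n) (Fin n) ℂ) - A).det = 0 := by
      rw [← eval_charpoly']
      exact hmu
    calc (mu • (1 : Matrix (Fin n) (Fin n) ℂ) - Aᵀ).det
        = ((mu • (1 : Matrix (Fin n) (Fin n) ℂ) - A)ᵀ).det := by
          rw [Matrix.transpose_sub, Matrix.transpose_smul, Matrix.transpose_one]
      _ = 0 := by rw [Matrix.det_transpose]; exact h0
  obtain ⟨v, hv0, hveq⟩ := Matrix.exists_mulVec_eq_zero_iff.2 hdet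
  rw [Matrix.sub_mulVec, Matrix.smul_mulVec, Matrix.one_mulVec, sub_eq_zero] at hveq
  have heigB : Aᵀ *ᵥ v = mu • v := hveq.symm
  have hrs : ∀ j : Fin n, ∑ k, B j k = lam1 := by
    intro j
    have := congrFun hB j
    simpa [Matrix.mulVec, dotProduct] using this
  have heigB' : ∀ i : Fin n, ∑ j, (B j i : ℂ) * v j = mu * v i := by
    intro i
    have := congrFun heigB i
    simpa [Matrix.mulVec, dotProduct, Matrix.transpose_apply, hA,
      Matrix.map_apply, Pi.smul_apply, smul_eq_mul] using this
  have hvsum : ∑ j, v j = 0 := by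
    have h1 : ∑ i, ∑ j, (B j i : ℂ) * v j = (lam1 : ℂ) * ∑ j, v j := by
      rw [Finset.sum_comm, Finset.mul_sum]
      refine Finset.sum_congr rfl fun j _ => ?_
      rw [← Finset.sum_mul]
      congr 1
      rw [← Complex.ofReal_sum, hrs j]
    have h2 : ∑ i, ∑ j, (B j i : ℂ) * v j = mu * ∑ j, v j := by
      rw [Finset.mul_sum]
      exact Finset.sum_congr rfl fun i _ => heigB' i
    have h3 : (mu - (lam1 : ℂ)) * ∑ j, v j = 0 := by
      rw [sub_mul, ← h1, ← h2, sub_self]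
    rcases mul_eq_zero.1 h3 with h | h
    · exact absurd (sub_eq_zero.1 h) hne
    · exact h
  constructor
  · refine mem_secondTypeRegion hodd' Fᵀ mu v hv0 hvsum ?_
    funext i
    have : ∑ j, ((B j i : ℂ) + (beta i : ℂ)) * v j = mu * v i := by
      have : ∑ j, ((B j i : ℂ) + (beta i : ℂ)) * v j
          = ∑ j, (B j i : ℂ) * v j + (beta i : ℂ) * ∑ j, v j := by
        rw [Finset.mul_sum, ← Finset.sum_add_distrib]
        exact Finset.sum_congr rfl fun j _ => by ring
      rw [this, hvsum, heigB' i, mul_zero, add_zero]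
    simpa [Matrix.mulVec, dotProduct, Matrix.map_apply, Matrix.transpose_apply,
      hF, Pi.smul_apply, smul_eq_mul, Complex.ofReal_add] using this
  · refine mem_secondTypeRegion hodd' Gᵀ mu v hv0 hvsum ?_
    funext i
    have : ∑ j, ((B j i : ℂ) + (gamma i : ℂ)) * v j = mu * v i := by
      have : ∑ j, ((B j i : ℂ) + (gamma i : ℂ)) * v j
          = ∑ j, (B j i : ℂ) * v j + (gamma i : ℂ) * ∑ j, v j := by
        rw [Finset.mul_sum, ← Finset.sum_add_distrib]
        exact Finset.sum_congr rfl fun j _ => by ring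
      rw [this, hvsum, heigB' i, mul_zero, add_zero]
    simpa [Matrix.mulVec, dotProduct, Matrix.map_apply, Matrix.transpose_apply,
      hG, Pi.smul_apply, smul_eq_mul, Complex.ofReal_add] using this

end Aux

/-- Corollary 2: for `n` odd, `n ≥ 3`, and `B` constant row-sum with row
sum `λ₁`, every eigenvalue of `B` other than `λ₁` lies in the intersection of the
Gershgorin regions of the second type of `Fᵀ` and `Gᵀ`. -/
theorem stmt6 {n : ℕ} (hodd : Odd n) (hn : 3 ≤ n) (B : Matrix (Fin n) (Fin n) ℝ)
    (lam1 : ℝ) (hB : B *ᵥ (1 : Fin n → ℝ) = lam1 • (1 : Fin n → ℝ))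
    (F G : Matrix (Fin n) (Fin n) ℝ)
    (hF : ∀ i j, F i j = B i j + -kthLargestOffDiag B j ((n - 1) / 2))
    (hG : ∀ i j, G i j = B i j + -kthLargestOffDiag B j ((n + 1) / 2))
    (mu : ℂ) (hmu : IsEigenvalueC B mu) (hne : mu ≠ (lam1 : ℂ)) :
    mu ∈ secondTypeRegion Fᵀ ∩ secondTypeRegion Gᵀ := by
  exact stmt6' hodd hn B lam1 hB
    (fun j => -kthLargestOffDiag B j ((n - 1) / 2))
    (fun j => -kthLargestOffDiag B j ((n + 1) / 2)) F G hF hG mu hmu hne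
end

section
/- Let n be an even integer and let A be an n×n real matrix whose characteristic polynomial (over ℂ) has roots λ₁, λ₂, …, λ_n counted with multiplicity, where λ₁ is real and is associated with a real eigenvector v having no zero components. Let B = S^{-1} A S with S = diag(v). For each j, let β_j be the (n/2)-th largest element among the n−1 off-diagonal entries b_{1j}, …, b_{j−1,j}, b_{j+1,j}, …, b_{nj} of column j of B, and let F = [b_{ij} − β_j]. Then for every i ∈ {2, 3, …, n}, λ_i ∈ Γ(F) ∩ Γ(F^T), where the λ_i for i ≥ 2 are the roots (with multiplicity) of charpoly(A)/(X − λ₁). -/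
open Matrix
open scoped ENNReal

lemma my_eval_charpoly {n : ℕ} {R : Type*} [CommRing R] (M : Matrix (Fin n) (Fin n) R) (x : R) :
    M.charpoly.eval x = (x • (1 : Matrix (Fin n) (Fin n) R) - M).det := by
  rw [Matrix.charpoly, ← Polynomial.coe_evalRingHom, RingHom.map_det]
  congr 1
  ext i j
  by_cases h : i = j
  · subst h; simp [charmatrix_apply_eq]
  · simp [charmatrix_apply_ne _ _ _ h, Matrix.one_apply_ne h]

lemma my_charpoly_transpose {n : ℕ} {R : Type*} [CommRing R] (M : Matrix (Fin n) (Fin n) R) :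
    Mᵀ.charpoly = M.charpoly := by
  rw [Matrix.charpoly, Matrix.charpoly, ← Matrix.det_transpose (charmatrix M)]
  congr 1
  ext i j
  by_cases h : i = j
  · subst h; simp [charmatrix_apply_eq]
  · simp [charmatrix_apply_ne _ _ _ h, charmatrix_apply_ne _ _ _ (Ne.symm h)]

lemma brauer_pair {n : ℕ} (M : Matrix (Fin n) (Fin n) ℝ) (μ : ℂ) (i j : Fin n) (hij : i ≠ j)
    (h : ‖μ - (M i i : ℝ)‖ * ‖μ - (M j j : ℝ)‖ ≤
        (∑ k ∈ Finset.univ.filter fun k => k ≠ i, |M i k|) *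
        (∑ k ∈ Finset.univ.filter fun k => k ≠ j, |M j k|)) :
    μ ∈ brauerSet M := by
  rcases hij.lt_or_gt with hlt | hlt
  · exact Set.mem_iUnion.2 ⟨i, Set.mem_iUnion.2 ⟨j, Set.mem_iUnion.2 ⟨hlt, h⟩⟩⟩
  · refine Set.mem_iUnion.2 ⟨j, Set.mem_iUnion.2 ⟨i, Set.mem_iUnion.2 ⟨hlt, ?_⟩⟩⟩
    simp only [Set.mem_setOf_eq] at h ⊢
    calc ‖μ - (M j j : ℝ)‖ * ‖μ - (M i i : ℝ)‖
        = ‖μ - (M i i : ℝ)‖ * ‖μ - (M j j : ℝ)‖ := mul_comm _ _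
      _ ≤ _ := h.trans (le_of_eq (mul_comm _ _))

lemma eig_mem_brauerSet {n : ℕ} (hn : 2 ≤ n) (M : Matrix (Fin n) (Fin n) ℝ) (μ : ℂ)
    (h : ((M.map ((↑) : ℝ → ℂ)).charpoly).IsRoot μ) : μ ∈ brauerSet M := by
  set Mc := M.map ((↑) : ℝ → ℂ) with hMc
  have hdet : (μ • (1 : Matrix (Fin n) (Fin n) ℂ) - Mc).det = 0 := by
    rw [← my_eval_charpoly]; exact h
  obtain ⟨x, hx0, hx⟩ := (Matrix.exists_mulVec_eq_zero_iff).2 hdet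
  have hx' : μ • x - Mc *ᵥ x = 0 := by
    rw [Matrix.sub_mulVec, Matrix.smul_mulVec, Matrix.one_mulVec] at hx
    exact hx
  have hxeq : ∀ a : Fin n, μ * x a = ∑ k, Mc a k * x k := by
    intro a
    have := congrFun hx' a
    simp only [Pi.sub_apply, Pi.smul_apply, smul_eq_mul, Pi.zero_apply, sub_eq_zero] at this
    rw [this]
    rfl
  obtain ⟨i, -, hi⟩ := Finset.exists_max_image Finset.univ (fun a => ‖x a‖)
    ⟨⟨0, by omega⟩, Finset.mem_univ _⟩
  have herase : (Finset.univ.erase i).Nonempty := by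
    rw [← Finset.card_pos, Finset.card_erase_of_mem (Finset.mem_univ i), Finset.card_univ,
      Fintype.card_fin]
    omega
  obtain ⟨j, hjmem, hj⟩ := Finset.exists_max_image (Finset.univ.erase i)
    (fun a => ‖x a‖) herase
  have hij : j ≠ i := (Finset.mem_erase.1 hjmem).1
  have hxi : x i ≠ 0 := by
    intro hxi
    apply hx0
    funext a
    have h1 : ‖x a‖ ≤ 0 := by simpa [hxi] using hi a (Finset.mem_univ a)
    exact norm_eq_zero.1 (le_antisymm h1 (norm_nonneg _))
  have key : ∀ a : Fin n, ‖μ - (M a a : ℝ)‖ * ‖x a‖ ≤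
      ∑ k ∈ Finset.univ.erase a, |M a k| * ‖x k‖ := by
    intro a
    have h1 : (μ - (M a a : ℝ)) * x a = ∑ k ∈ Finset.univ.erase a, Mc a k * x k := by
      have h2 := hxeq a
      rw [← Finset.sum_erase_add _ _ (Finset.mem_univ a)] at h2
      have hMaa : Mc a a = ((M a a : ℝ) : ℂ) := rfl
      rw [hMaa] at h2
      linear_combination h2
    calc ‖μ - (M a a : ℝ)‖ * ‖x a‖
        = ‖(μ - (M a a : ℝ)) * x a‖ := (norm_mul _ _).symm
      _ = ‖∑ k ∈ Finset.univ.erase a, Mc a k * x k‖ := by rw [h1]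
      _ ≤ ∑ k ∈ Finset.univ.erase a, ‖Mc a k * x k‖ := norm_sum_le _ _
      _ = ∑ k ∈ Finset.univ.erase a, |M a k| * ‖x k‖ := by
          refine Finset.sum_congr rfl fun k _ => ?_
          rw [norm_mul]
          congr 1
          exact Complex.norm_real _
  by_cases hxj : x j = 0
  · have hzero : ∀ k, k ≠ i → x k = 0 := by
      intro k hk
      have h1 : ‖x k‖ ≤ 0 := by
        simpa [hxj] using hj k (Finset.mem_erase.2 ⟨hk, Finset.mem_univ k⟩)
      exact norm_eq_zero.1 (le_antisymm h1 (norm_nonneg _))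
    have hmu : μ = ((M i i : ℝ) : ℂ) := by
      have h2 := hxeq i
      rw [Finset.sum_eq_single i (fun k _ hk => by rw [hzero k hk, mul_zero]) (by simp)] at h2
      have hMii : Mc i i = ((M i i : ℝ) : ℂ) := rfl
      rw [hMii] at h2
      exact mul_right_cancel₀ hxi h2
    refine brauer_pair M μ i j (Ne.symm hij) ?_
    rw [hmu]
    simp only [sub_self, norm_zero, zero_mul]
    have : ∀ (a : Fin n) (s : Finset (Fin n)), (0:ℝ) ≤ ∑ k ∈ s, |M a k| :=
      fun a s => Finset.sum_nonneg fun k _ => abs_nonneg _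
    positivity
  · have hxjpos : 0 < ‖x j‖ := norm_pos_iff.2 hxj
    have hxipos : 0 < ‖x i‖ := norm_pos_iff.2 hxi
    have hRi : ‖μ - (M i i : ℝ)‖ * ‖x i‖ ≤
        (∑ k ∈ Finset.univ.filter fun k => k ≠ i, |M i k|) * ‖x j‖ := by
      refine (key i).trans ?_
      rw [Finset.filter_ne', Finset.sum_mul]
      refine Finset.sum_le_sum fun k hk => ?_
      have hki : k ≠ i := (Finset.mem_erase.1 hk).1
      exact mul_le_mul_of_nonneg_left (hj k (Finset.mem_erase.2 ⟨hki, Finset.mem_univ k⟩))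
        (abs_nonneg _)
    have hRj : ‖μ - (M j j : ℝ)‖ * ‖x j‖ ≤
        (∑ k ∈ Finset.univ.filter fun k => k ≠ j, |M j k|) * ‖x i‖ := by
      refine (key j).trans ?_
      rw [Finset.filter_ne', Finset.sum_mul]
      refine Finset.sum_le_sum fun k hk => ?_
      exact mul_le_mul_of_nonneg_left (hi k (Finset.mem_univ k)) (abs_nonneg _)
    refine brauer_pair M μ i j (Ne.symm hij) ?_
    have hmul := mul_le_mul hRi hRj (by positivity) (by positivity)
    have h2 : ‖μ - (M i i : ℝ)‖ * ‖μ - (M j j : ℝ)‖ *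
        (‖x i‖ * ‖x j‖) ≤
        ((∑ k ∈ Finset.univ.filter fun k => k ≠ i, |M i k|) *
        (∑ k ∈ Finset.univ.filter fun k => k ≠ j, |M j k|)) *
        (‖x i‖ * ‖x j‖) := by
      calc ‖μ - (M i i : ℝ)‖ * ‖μ - (M j j : ℝ)‖ *
            (‖x i‖ * ‖x j‖)
          = ‖μ - (M i i : ℝ)‖ * ‖x i‖ *
            (‖μ - (M j j : ℝ)‖ * ‖x j‖) := by ring
        _ ≤ (∑ k ∈ Finset.univ.filter fun k => k ≠ i, |M i k|) * ‖x j‖ *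
            ((∑ k ∈ Finset.univ.filter fun k => k ≠ j, |M j k|) * ‖x i‖) := hmul
        _ = _ := by ring
    exact le_of_mul_le_mul_right h2 (by positivity)

/-- Theorem 8, even case: with `B = S⁻¹ A S`, `S = diag v`, and `F`
obtained by subtracting from each column `j` of `B` its `(n/2)`-th largest
off-diagonal entry, all eigenvalues `λ₂, …, λ_n` of `A` other than `λ₁` lie in
`Γ(F) ∩ Γ(Fᵀ)`. -/
theorem stmt8 {n : ℕ} (hn : 0 < n) (heven : Even n) (A : Matrix (Fin n) (Fin n) ℝ)
    (lam : Fin n → ℂ)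
    (hroots : ((A.map ((↑) : ℝ → ℂ)).charpoly).roots = Finset.univ.val.map lam)
    (lam1 : ℝ) (hlam1 : lam ⟨0, hn⟩ = (lam1 : ℂ))
    (v : Fin n → ℝ) (hv : ∀ i, v i ≠ 0) (hAv : A *ᵥ v = lam1 • v)
    (S B : Matrix (Fin n) (Fin n) ℝ) (hS : S = Matrix.diagonal v) (hB : B = S⁻¹ * A * S)
    (F : Matrix (Fin n) (Fin n) ℝ)
    (hF : ∀ i j, F i j = B i j - kthLargestOffDiag B j (n / 2))
    (i : Fin n) (hi : i ≠ ⟨0, hn⟩) :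
    lam i ∈ brauerSet F ∩ brauerSet Fᵀ := by
  classical
  have hn2 : 2 ≤ n := by
    obtain ⟨k, hk⟩ := heven
    omega
  set i0 : Fin n := ⟨0, hn⟩ with hi0
  set w : Fin n → ℝ := fun j => kthLargestOffDiag B j (n / 2) with hw
  set Ac : Matrix (Fin n) (Fin n) ℂ := A.map ((↑) : ℝ → ℂ) with hAc
  set Bc : Matrix (Fin n) (Fin n) ℂ := B.map ((↑) : ℝ → ℂ) with hBcdef
  set Fc : Matrix (Fin n) (Fin n) ℂ := F.map ((↑) : ℝ → ℂ) with hFcdef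
  set ec : Fin n → ℂ := fun _ => 1 with hec
  set pw : Fin n → ℂ := fun j => ((w j : ℝ) : ℂ) with hpw
  set s : ℂ := ∑ j, pw j with hs
  -- S has unit determinant
  have hdetS : IsUnit S.det := by
    rw [hS, Matrix.det_diagonal]
    exact isUnit_iff_ne_zero.2 (Finset.prod_ne_zero_iff.2 fun a _ => hv a)
  -- B *ᵥ 1 = lam1 • 1
  have hSe : S *ᵥ (fun _ => (1 : ℝ)) = v := by
    funext a
    rw [hS]
    simp [Matrix.mulVec_diagonal]
  have hS1 : S⁻¹ *ᵥ v = fun _ => (1 : ℝ) := by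
    rw [← hSe, Matrix.mulVec_mulVec, Matrix.nonsing_inv_mul S hdetS, Matrix.one_mulVec]
  have hBe : B *ᵥ (fun _ => (1 : ℝ)) = fun _ => lam1 := by
    rw [hB, ← Matrix.mulVec_mulVec, hSe, ← Matrix.mulVec_mulVec, hAv, Matrix.mulVec_smul, hS1]
    funext a
    simp
  have hBce : Bc *ᵥ ec = fun _ => (lam1 : ℂ) := by
    funext a
    have h1 := congrFun hBe a
    simp only [Matrix.mulVec, dotProduct, mul_one] at h1
    simp only [Matrix.mulVec, dotProduct, hec, mul_one, hBcdef, Matrix.map_apply]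
    rw [← Complex.ofReal_sum, h1]
  -- charpoly of Bc equals charpoly of Ac
  have hcharBA : Bc.charpoly = Ac.charpoly := by
    set Sc : Matrix (Fin n) (Fin n) ℂ := S.map ((↑) : ℝ → ℂ) with hSc
    have hmapc : ∀ (M N : Matrix (Fin n) (Fin n) ℝ),
        (M * N).map ((↑) : ℝ → ℂ) = M.map ((↑) : ℝ → ℂ) * N.map ((↑) : ℝ → ℂ) := by
      intro M N
      funext a b
      simp [Matrix.mul_apply, Matrix.map_apply]
    have hdetSc : IsUnit Sc.det := by
      have : Sc.det = ((S.det : ℝ) : ℂ) := by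
        rw [hSc]
        exact (RingHom.map_det Complex.ofRealHom S).symm
      rw [this]
      exact isUnit_iff_ne_zero.2 (by
        simp only [ne_eq, Complex.ofReal_eq_zero]
        exact hdetS.ne_zero)
    have hleft : (S⁻¹.map ((↑) : ℝ → ℂ)) * Sc = 1 := by
      rw [hSc, ← hmapc, Matrix.nonsing_inv_mul S hdetS]
      funext a b
      by_cases h : a = b <;> simp [Matrix.map_apply, Matrix.one_apply, h]
    have hScinv : Sc⁻¹ = S⁻¹.map ((↑) : ℝ → ℂ) := Matrix.inv_eq_left_inv hleft
    have hBcc : Bc = Sc⁻¹ * Ac * Sc := by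
      rw [hBcdef, hB, hmapc, hmapc, hScinv, hAc, hSc]
    apply Polynomial.funext
    intro x
    rw [my_eval_charpoly, my_eval_charpoly]
    have hconj : x • (1 : Matrix (Fin n) (Fin n) ℂ) - Bc =
        Sc⁻¹ * ((x • (1 : Matrix (Fin n) (Fin n) ℂ) - Ac) * Sc) := by
      rw [Matrix.sub_mul, Matrix.mul_sub, Matrix.smul_mul, Matrix.one_mul, Matrix.mul_smul,
        Matrix.nonsing_inv_mul Sc hdetSc, hBcc, Matrix.mul_assoc]
    rw [hconj, Matrix.det_mul, Matrix.det_mul, Matrix.det_nonsing_inv]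
    rw [mul_comm (x • 1 - Ac).det Sc.det, ← mul_assoc,
      Ring.inverse_mul_cancel _ hdetSc, one_mul]
  -- the factorization identity
  have hPQ : Fc.charpoly * (Polynomial.X - Polynomial.C ((lam1 : ℝ) : ℂ)) =
      Bc.charpoly * (Polynomial.X - Polynomial.C (((lam1 : ℝ) : ℂ) - s)) := by
    apply Polynomial.eq_of_infinite_eval_eq
    have hsub : (((Bc.charpoly.roots.toFinset : Set ℂ)) ∪ {((lam1:ℝ):ℂ)})ᶜ ⊆
        { x | Polynomial.eval x (Fc.charpoly * (Polynomial.X - Polynomial.C ((lam1 : ℝ) : ℂ))) =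
          Polynomial.eval x (Bc.charpoly * (Polynomial.X - Polynomial.C (((lam1 : ℝ) : ℂ) - s))) }
        := by
      intro x hx
      simp only [Set.mem_compl_iff, Set.mem_union, Set.mem_singleton_iff, not_or,
        Finset.coe_sort_coe, Set.mem_setOf_eq, Finset.mem_coe, Multiset.mem_toFinset] at hx ⊢
      obtain ⟨hx2, hx1⟩ := hx
      have hx1' : x - ((lam1:ℝ):ℂ) ≠ 0 := sub_ne_zero.2 hx1
      have hx2' : Polynomial.eval x Bc.charpoly ≠ 0 := by
        intro hc
        exact hx2 ((Polynomial.mem_roots (Bc.charpoly_monic.ne_zero)).2 hc)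
      set M : Matrix (Fin n) (Fin n) ℂ := x • (1 : Matrix (Fin n) (Fin n) ℂ) - Bc with hM
      have hdetM : M.det = Polynomial.eval x Bc.charpoly := (my_eval_charpoly Bc x).symm
      have hMunit : IsUnit M.det := isUnit_iff_ne_zero.2 (hdetM ▸ hx2')
      have hMe : M *ᵥ ec = (x - ((lam1:ℝ):ℂ)) • ec := by
        rw [hM, Matrix.sub_mulVec, Matrix.smul_mulVec, Matrix.one_mulVec, hBce]
        funext a
        simp [hec, sub_smul]
      have hMinve : M⁻¹ *ᵥ ec = (x - ((lam1:ℝ):ℂ))⁻¹ • ec := by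
        have h1 : M⁻¹ *ᵥ (M *ᵥ ec) = ec := by
          rw [Matrix.mulVec_mulVec, Matrix.nonsing_inv_mul M hMunit, Matrix.one_mulVec]
        rw [hMe, Matrix.mulVec_smul] at h1
        rw [eq_comm, inv_smul_eq_iff₀ hx1']
        exact h1.symm
      have hxIF : x • (1 : Matrix (Fin n) (Fin n) ℂ) - Fc =
          M + Matrix.replicateCol Unit ec * Matrix.replicateRow Unit pw := by
        funext a b
        simp only [Matrix.sub_apply, Matrix.add_apply, Matrix.mul_apply, Matrix.replicateCol_apply,
          Matrix.replicateRow_apply, hM, Finset.univ_unique, Finset.sum_singleton, hec, one_mul,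
          hFcdef, hBcdef, Matrix.map_apply, hF a b, hpw]
        push_cast
        ring
      have hdot : pw ⬝ᵥ (M⁻¹ *ᵥ ec) = (x - ((lam1:ℝ):ℂ))⁻¹ * s := by
        rw [hMinve]
        simp only [dotProduct, Pi.smul_apply, hec, smul_eq_mul, mul_one, hs]
        rw [Finset.mul_sum]
        exact Finset.sum_congr rfl fun a _ => mul_comm _ _
      have hentry : (Matrix.replicateRow Unit pw * M⁻¹ * Matrix.replicateCol Unit ec) default default =
          pw ⬝ᵥ (M⁻¹ *ᵥ ec) := by
        simp only [Matrix.mul_apply, Matrix.replicateRow_apply, Matrix.replicateCol_apply, dotProduct,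
          Matrix.mulVec, Finset.univ_unique, Finset.sum_singleton, Finset.sum_mul,
          Finset.mul_sum]
        simp only [mul_assoc]
        exact Finset.sum_comm
      have hrowcol : (1 + Matrix.replicateRow Unit pw * M⁻¹ * Matrix.replicateCol Unit ec).det =
          1 + (x - ((lam1:ℝ):ℂ))⁻¹ * s := by
        rw [Matrix.det_unique, Matrix.add_apply, Matrix.one_apply_eq, hentry, hdot]
      have hevF : Polynomial.eval x Fc.charpoly =
          M.det * (1 + (x - ((lam1:ℝ):ℂ))⁻¹ * s) := by
        rw [my_eval_charpoly, hxIF, Matrix.det_add_replicateCol_mul_replicateRow hMunit, hrowcol]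
      simp only [Polynomial.eval_mul, Polynomial.eval_sub, Polynomial.eval_X, Polynomial.eval_C]
      rw [hevF, ← hdetM, mul_assoc]
      congr 1
      rw [add_mul, one_mul, mul_comm ((x - ((lam1:ℝ):ℂ))⁻¹) s, mul_assoc,
        inv_mul_cancel₀ hx1', mul_one]
      ring
    refine Set.Infinite.mono hsub ?_
    apply Set.Finite.infinite_compl
    exact (Bc.charpoly.roots.toFinset.finite_toSet).union (Set.finite_singleton _)
  -- extract the roots of Fc.charpoly
  have huniv : (Finset.univ : Finset (Fin n)).val = i0 ::ₘ (Finset.univ.erase i0).val := by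
    rw [Finset.erase_val]
    exact (Multiset.cons_erase (Finset.mem_univ i0 : i0 ∈ Finset.univ)).symm
  have hrootsB : Bc.charpoly.roots =
      ((lam1:ℝ):ℂ) ::ₘ (Finset.univ.erase i0).val.map lam := by
    rw [hcharBA, hroots, huniv, Multiset.map_cons, hlam1]
  have hFne : Fc.charpoly ≠ 0 := Fc.charpoly_monic.ne_zero
  have hrootsF : Fc.charpoly.roots =
      (Finset.univ.erase i0).val.map lam + {((lam1:ℝ):ℂ) - s} := by
    have h1 : (Fc.charpoly * (Polynomial.X - Polynomial.C ((lam1 : ℝ) : ℂ))).roots =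
        (Bc.charpoly * (Polynomial.X - Polynomial.C (((lam1 : ℝ) : ℂ) - s))).roots := by
      rw [hPQ]
    rw [Polynomial.roots_mul (mul_ne_zero hFne (Polynomial.X_sub_C_ne_zero _)),
      Polynomial.roots_mul (mul_ne_zero Bc.charpoly_monic.ne_zero
        (Polynomial.X_sub_C_ne_zero _)), Polynomial.roots_X_sub_C, Polynomial.roots_X_sub_C,
      hrootsB] at h1
    have h2 : {((lam1:ℝ):ℂ)} + Fc.charpoly.roots =
        {((lam1:ℝ):ℂ)} + ((Finset.univ.erase i0).val.map lam + {((lam1:ℝ):ℂ) - s}) := by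
      rw [add_comm ({((lam1:ℝ):ℂ)} : Multiset ℂ) Fc.charpoly.roots, h1,
        ← Multiset.singleton_add, add_assoc]
    exact add_left_cancel h2
  have hmem : lam i ∈ Fc.charpoly.roots := by
    rw [hrootsF]
    refine Multiset.mem_add.2 (Or.inl ?_)
    exact Multiset.mem_map_of_mem lam
      (by rw [← Finset.mem_def]; exact Finset.mem_erase.2 ⟨hi, Finset.mem_univ i⟩)
  have hrootF : (Fc.charpoly).IsRoot (lam i) := Polynomial.isRoot_of_mem_roots hmem
  have hrootFT : ((Fᵀ.map ((↑) : ℝ → ℂ)).charpoly).IsRoot (lam i) := by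
    rw [Matrix.transpose_map, my_charpoly_transpose]
    exact hrootF
  exact ⟨eig_mem_brauerSet hn2 F (lam i) hrootF, eig_mem_brauerSet hn2 Fᵀ (lam i) hrootFT⟩
end
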